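/- arXiv:1908.05726 — 7 statements merged into one kernel-verified Lean document; each statement's English description precedes it below -/
import Mathlib

section
/- Let $\tau^2 > 0$, $\sigma^2 > 0$, $\alpha > 1$, and suppose $\lambda_i^{(n)} \le C n i^{-\alpha}$ for all $1 \le i \le n$ and a constant $C > 0$. With $a_{ni} = 1/(\tau^2 + \sigma^2 \lambda_i^{(n)})$, there exists $C' > 0$ such that $\sum_{i=1}^n \lambda_i^{(n)} a_{ni}^2 \le C' n^{1/\alpha}$ for all $n \ge 1$. -/
open Finset

private lemma tail_rpow_sum (α : ℝ) (hα : 1 < α) (m n : ℕ) (hm : 1 ≤ m) (hmn : m ≤ n) :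
    ∑ i ∈ Finset.Ioc m n, ((i : ℝ)) ^ (-α) ≤ (m : ℝ) ^ (1 - α) / (α - 1) := by
  have hmpos : (0 : ℝ) < m := by exact_mod_cast hm
  have hanti : AntitoneOn (fun x : ℝ => x ^ (-α)) (Set.Icc (m : ℝ) n) := by
    intro x hx y hy hxy
    exact Real.rpow_le_rpow_of_nonpos (lt_of_lt_of_le hmpos hx.1) hxy (by linarith)
  have h1 : ∑ i ∈ Finset.Ioc m n, ((i : ℝ)) ^ (-α)
      = ∑ i ∈ Finset.Ico m n, (((i + 1 : ℕ) : ℝ)) ^ (-α) := by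
    rw [← Finset.Ico_add_one_add_one_eq_Ioc]
    rw [show Finset.Ico (m + 1) (n + 1) = (Finset.Ico m n).map (addRightEmbedding 1) by
      rw [Finset.map_add_right_Ico]]
    rw [Finset.sum_map]
    rfl
  have h2 := AntitoneOn.sum_le_integral_Ico (f := fun x : ℝ => x ^ (-α)) hmn hanti
  have h3 : (∫ x in (m : ℝ)..(n : ℝ), x ^ (-α))
      = ((n : ℝ) ^ (-α + 1) - (m : ℝ) ^ (-α + 1)) / (-α + 1) := by
    apply integral_rpow
    right
    refine ⟨by intro h; linarith, ?_⟩
    rw [Set.uIcc_of_le (show (m:ℝ) ≤ (n:ℝ) by exact_mod_cast hmn)]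
    intro hmem
    rw [Set.mem_Icc] at hmem
    linarith [hmem.1]
  have hnm : (m : ℝ) ^ (-α + 1) ≥ (n : ℝ) ^ (-α + 1) := by
    exact Real.rpow_le_rpow_of_nonpos hmpos (by exact_mod_cast hmn) (by linarith)
  calc ∑ i ∈ Finset.Ioc m n, ((i : ℝ)) ^ (-α)
      ≤ ((n : ℝ) ^ (-α + 1) - (m : ℝ) ^ (-α + 1)) / (-α + 1) := by
        rw [h1]; rw [h3] at h2; exact h2
    _ = ((m : ℝ) ^ (-α + 1) - (n : ℝ) ^ (-α + 1)) / (α - 1) := by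
        rw [div_eq_div_iff (by linarith) (by linarith)]; ring
    _ ≤ (m : ℝ) ^ (1 - α) / (α - 1) := by
        rw [show (1 : ℝ) - α = -α + 1 by ring]
        apply div_le_div_of_nonneg_right ?_ (by linarith) |>.trans_eq rfl
        have : (0:ℝ) ≤ (n : ℝ) ^ (-α + 1) := Real.rpow_nonneg (by positivity) _
        linarith

/-- `∑ λᵢ aₙᵢ² ≤ C' n^(1/α)` under the eigenvalue bound `λᵢ ≤ C n i^(-α)`. -/
theorem stmt1
    (τ2 σ2 α : ℝ) (hτ : 0 < τ2) (hσ : 0 < σ2) (hα : 1 < α)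
    (lam : ℕ → ℕ → ℝ)
    (hpos : ∀ n i, 1 ≤ i → i ≤ n → 0 < lam n i)
    (C : ℝ) (hC : 0 < C)
    (hub : ∀ n i, 1 ≤ i → i ≤ n → lam n i ≤ C * n * (i : ℝ) ^ (-α)) :
    ∃ C' : ℝ, 0 < C' ∧ ∀ n : ℕ, 1 ≤ n →
      ∑ i ∈ Finset.Icc 1 n, lam n i * (1 / (τ2 + σ2 * lam n i)) ^ 2
        ≤ C' * (n : ℝ) ^ (1 / α) := by
  have hα0 : 0 < α := by linarith
  have hα1 : 0 < α - 1 := by linarith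
  refine ⟨1 / (2 * σ2 * τ2) + C / (τ2 ^ 2 * (α - 1)), by positivity, ?_⟩
  intro n hn
  have hn1 : (1 : ℝ) ≤ (n : ℝ) := by exact_mod_cast hn
  set r : ℝ := (n : ℝ) ^ (1 / α) with hr
  have hr1 : 1 ≤ r := Real.one_le_rpow hn1 (by positivity)
  set m : ℕ := ⌈r⌉₊ with hmdef
  have hm1 : 1 ≤ m := Nat.one_le_iff_ne_zero.mpr (by
    simp only [hmdef, ne_eq, Nat.ceil_eq_zero, not_le]; linarith)
  have hmn : m ≤ n := by
    apply Nat.ceil_le.mpr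
    calc r ≤ (n : ℝ) ^ (1 : ℝ) := Real.rpow_le_rpow_of_exponent_le hn1 (by
          rw [div_le_one (by positivity)]; linarith)
      _ = n := Real.rpow_one _
  have hrm : r ≤ (m : ℝ) := Nat.le_ceil r
  have hmr : (m : ℝ) ≤ r + 1 := by
    have := Nat.ceil_lt_add_one (show (0:ℝ) ≤ r by linarith)
    linarith
  -- split the sum
  rw [show Finset.Icc 1 n = Finset.Ioc 0 n from (Finset.Icc_add_one_left_eq_Ioc 0 n),
    ← Finset.sum_Ioc_consecutive _ (Nat.zero_le m) hmn,
    show Finset.Ioc 0 m = Finset.Icc 1 m from (Finset.Icc_add_one_left_eq_Ioc 0 m).symm]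
  -- head bound
  have hhead : ∑ i ∈ Finset.Icc 1 m, lam n i * (1 / (τ2 + σ2 * lam n i)) ^ 2
      ≤ (m : ℝ) * (1 / (4 * σ2 * τ2)) := by
    calc ∑ i ∈ Finset.Icc 1 m, lam n i * (1 / (τ2 + σ2 * lam n i)) ^ 2
        ≤ ∑ _i ∈ Finset.Icc 1 m, (1 / (4 * σ2 * τ2)) := by
          apply Finset.sum_le_sum
          intro i hi
          obtain ⟨hi1, him⟩ := Finset.mem_Icc.mp hi
          have hl := hpos n i hi1 (him.trans hmn)
          have hd : 0 < τ2 + σ2 * lam n i := by positivity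
          rw [div_pow, one_pow, mul_one_div,
            div_le_div_iff₀ (by positivity) (by positivity)]
          nlinarith [sq_nonneg (τ2 - σ2 * lam n i)]
      _ = (m : ℝ) * (1 / (4 * σ2 * τ2)) := by
          rw [Finset.sum_const, Nat.card_Icc, Nat.add_sub_cancel, nsmul_eq_mul]
  -- tail bound
  have htail : ∑ i ∈ Finset.Ioc m n, lam n i * (1 / (τ2 + σ2 * lam n i)) ^ 2
      ≤ C * n / τ2 ^ 2 * ((m : ℝ) ^ (1 - α) / (α - 1)) := by
    calc ∑ i ∈ Finset.Ioc m n, lam n i * (1 / (τ2 + σ2 * lam n i)) ^ 2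
        ≤ ∑ i ∈ Finset.Ioc m n, C * n / τ2 ^ 2 * (i : ℝ) ^ (-α) := by
          apply Finset.sum_le_sum
          intro i hi
          obtain ⟨hmi, hin⟩ := Finset.mem_Ioc.mp hi
          have hi1 : 1 ≤ i := hm1.trans hmi.le
          have hl := hpos n i hi1 hin
          have hub' := hub n i hi1 hin
          have hd : 0 < τ2 + σ2 * lam n i := by positivity
          have h1 : lam n i * (1 / (τ2 + σ2 * lam n i)) ^ 2 ≤ lam n i / τ2 ^ 2 := by
            rw [div_pow, one_pow, mul_one_div,
              div_le_div_iff₀ (by positivity) (by positivity)]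
            nlinarith [mul_pos hσ hl, sq_nonneg (σ2 * lam n i),
              mul_pos hτ (mul_pos hσ hl), mul_pos hl (mul_pos hτ (mul_pos hσ hl))]
          refine h1.trans ?_
          rw [div_mul_eq_mul_div, div_le_div_iff₀ (by positivity) (by positivity)]
          nlinarith [Real.rpow_nonneg (show (0:ℝ) ≤ (i:ℝ) by positivity) (-α)]
      _ = C * n / τ2 ^ 2 * ∑ i ∈ Finset.Ioc m n, (i : ℝ) ^ (-α) := by
          rw [Finset.mul_sum]
      _ ≤ C * n / τ2 ^ 2 * ((m : ℝ) ^ (1 - α) / (α - 1)) := by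
          apply mul_le_mul_of_nonneg_left (tail_rpow_sum α hα m n hm1 hmn) (by positivity)
  -- combine
  have hhead2 : (m : ℝ) * (1 / (4 * σ2 * τ2)) ≤ 1 / (2 * σ2 * τ2) * r := by
    rw [div_mul_eq_mul_div, one_mul, mul_one_div, div_le_div_iff₀ (by positivity) (by positivity)]
    nlinarith [mul_pos hσ hτ]
  have htail2 : C * n / τ2 ^ 2 * ((m : ℝ) ^ (1 - α) / (α - 1)) ≤ C / (τ2 ^ 2 * (α - 1)) * r := by
    have hm0 : (0 : ℝ) < m := by exact_mod_cast hm1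
    have hmle : (m : ℝ) ^ (1 - α) ≤ r ^ (1 - α) :=
      Real.rpow_le_rpow_of_nonpos (by linarith) hrm (by linarith)
    have hn0 : (0 : ℝ) < (n : ℝ) := by linarith
    have hrpow : (n : ℝ) * r ^ (1 - α) = r := by
      rw [hr, ← Real.rpow_mul hn0.le]
      nth_rewrite 1 [show (n : ℝ) = (n : ℝ) ^ (1 : ℝ) from (Real.rpow_one _).symm]
      rw [← Real.rpow_add hn0]
      congr 1
      field_simp
      ring
    calc C * n / τ2 ^ 2 * ((m : ℝ) ^ (1 - α) / (α - 1))
        ≤ C * n / τ2 ^ 2 * (r ^ (1 - α) / (α - 1)) := by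
          apply mul_le_mul_of_nonneg_left _ (by positivity)
          exact div_le_div_of_nonneg_right hmle (by linarith)
      _ = C / (τ2 ^ 2 * (α - 1)) * ((n : ℝ) * r ^ (1 - α)) := by
          field_simp
      _ = C / (τ2 ^ 2 * (α - 1)) * r := by rw [hrpow]
  calc ∑ i ∈ Finset.Icc 1 m, lam n i * (1 / (τ2 + σ2 * lam n i)) ^ 2
        + ∑ i ∈ Finset.Ioc m n, lam n i * (1 / (τ2 + σ2 * lam n i)) ^ 2
      ≤ 1 / (2 * σ2 * τ2) * r + C / (τ2 ^ 2 * (α - 1)) * r :=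
        add_le_add (hhead.trans hhead2) (htail.trans htail2)
    _ = (1 / (2 * σ2 * τ2) + C / (τ2 ^ 2 * (α - 1))) * r := by ring
end

section
/- Let $\tau^2 > 0$, $\sigma^2 > 0$, $\alpha > 1$, and suppose $\lambda_i^{(n)} \le C n i^{-\alpha}$ for all $1 \le i \le n$ with $C > 0$. With $b_{ni} = \lambda_i^{(n)}/(\tau^2 + \sigma^2 \lambda_i^{(n)})$, there exists $C' > 0$ such that $\sum_{i=1}^n b_{ni} \le C' n^{1/\alpha}$ and $\sum_{i=1}^n b_{ni}^2 \le C' n^{1/\alpha}$ for all $n \ge 1$. -/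
open Finset

lemma tail_sum_le (α : ℝ) (hα : 1 < α) (m n : ℕ) (hm : 1 ≤ m) (hmn : m ≤ n) :
    ∑ i ∈ Finset.Ioc m n, (i : ℝ) ^ (-α) ≤ (m : ℝ) ^ (1 - α) / (α - 1) := by
  have hmpos : (0:ℝ) < m := by exact_mod_cast hm
  have hanti : AntitoneOn (fun x : ℝ => x ^ (-α)) (Set.Icc (m:ℝ) n) := by
    intro x hx y hy hxy
    exact Real.rpow_le_rpow_of_nonpos (lt_of_lt_of_le hmpos hx.1) hxy (by linarith)
  have key := AntitoneOn.sum_le_integral_Ico hmn hanti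
  have hre : ∑ i ∈ Finset.Ioc m n, (i : ℝ) ^ (-α)
      = ∑ i ∈ Finset.Ico m n, ((i + 1 : ℕ) : ℝ) ^ (-α) := by
    refine Finset.sum_bij' (fun i _ => i - 1) (fun i _ => i + 1) ?_ ?_ ?_ ?_ ?_
    · intro i hi
      simp only [Finset.mem_Ioc] at hi
      simp only [Finset.mem_Ico]
      omega
    · intro i hi
      simp only [Finset.mem_Ico] at hi
      simp only [Finset.mem_Ioc]
      omega
    · intro i hi; simp only [Finset.mem_Ioc] at hi; omega
    · intro i hi; omega
    · intro i hi
      simp only [Finset.mem_Ioc] at hi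
      congr 2
      omega
  have hint : ∫ x in (m:ℝ)..n, x ^ (-α) = ((n:ℝ) ^ (-α+1) - (m:ℝ)^(-α+1)) / (-α+1) := by
    rw [integral_rpow]
    right
    constructor
    · intro h; linarith
    · rw [Set.uIcc_of_le (by exact_mod_cast hmn)]
      intro h
      exact absurd h.1 (by linarith)
  rw [hre]
  refine key.trans ?_
  rw [hint]
  have hn1 : (0:ℝ) < (n:ℝ) ^ (-α+1) := Real.rpow_pos_of_pos (by exact_mod_cast hm.trans hmn) _
  have : ((n:ℝ) ^ (-α+1) - (m:ℝ)^(-α+1)) / (-α+1) = ((m:ℝ)^(-α+1) - (n:ℝ) ^ (-α+1)) / (α-1) := by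
    rw [div_eq_div_iff (by linarith) (by linarith)]; ring
  rw [this]
  have h1 : (1:ℝ) - α = -α + 1 := by ring
  rw [h1]
  apply div_le_div_of_nonneg_right _ (by linarith)
  linarith

/-- `∑ bₙᵢ ≤ C' n^(1/α)` and `∑ bₙᵢ² ≤ C' n^(1/α)` with
`bₙᵢ = λᵢ/(τ² + σ² λᵢ)`, under the eigenvalue bound `λᵢ ≤ C n i^(-α)`. -/
theorem stmt2
    (τ2 σ2 α : ℝ) (hτ : 0 < τ2) (hσ : 0 < σ2) (hα : 1 < α)
    (lam : ℕ → ℕ → ℝ)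
    (hpos : ∀ n i, 1 ≤ i → i ≤ n → 0 < lam n i)
    (C : ℝ) (hC : 0 < C)
    (hub : ∀ n i, 1 ≤ i → i ≤ n → lam n i ≤ C * n * (i : ℝ) ^ (-α)) :
    ∃ C' : ℝ, 0 < C' ∧ ∀ n : ℕ, 1 ≤ n →
      (∑ i ∈ Finset.Icc 1 n, lam n i / (τ2 + σ2 * lam n i)
        ≤ C' * (n : ℝ) ^ (1 / α)) ∧
      (∑ i ∈ Finset.Icc 1 n, (lam n i / (τ2 + σ2 * lam n i)) ^ 2
        ≤ C' * (n : ℝ) ^ (1 / α)) := by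
  set K : ℝ := 2 / σ2 + C / (τ2 * (α - 1)) with hK
  have hKpos : 0 < K := by
    have h1 : (0:ℝ) < 2 / σ2 := by positivity
    have h2 : (0:ℝ) < C / (τ2 * (α - 1)) := by
      apply div_pos hC; apply mul_pos hτ; linarith
    rw [hK]; linarith
  have hC'pos : 0 < K * (1 + 1 / σ2) := by
    have : (0:ℝ) < 1 + 1 / σ2 := by positivity
    exact mul_pos hKpos this
  refine ⟨K * (1 + 1 / σ2), hC'pos, ?_⟩
  intro n hn
  have hα0 : 0 < α := by linarith
  have hn0 : (0:ℝ) < n := by exact_mod_cast hn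
  have hn1 : (1:ℝ) ≤ n := by exact_mod_cast hn
  -- the key bound on the first sum
  have hx1 : (1:ℝ) ≤ (n:ℝ) ^ (1/α) := Real.one_le_rpow hn1 (by positivity)
  have hx0 : (0:ℝ) < (n:ℝ) ^ (1/α) := by linarith
  set m : ℕ := ⌈(n:ℝ) ^ (1/α)⌉₊ with hm
  have hm1 : 1 ≤ m := Nat.one_le_ceil_iff.mpr hx0
  have hmn : m ≤ n := by
    rw [hm, Nat.ceil_le]
    calc (n:ℝ) ^ (1/α) ≤ (n:ℝ) ^ (1:ℝ) := by
          apply Real.rpow_le_rpow_of_exponent_le hn1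
          rw [div_le_one hα0]; linarith
      _ = n := Real.rpow_one _
  have hmlb : (n:ℝ) ^ (1/α) ≤ m := Nat.le_ceil _
  have hmub : (m:ℝ) ≤ 2 * (n:ℝ) ^ (1/α) := by
    have := Nat.ceil_lt_add_one (le_of_lt hx0)
    rw [hm]; push_cast; linarith [this]
  -- per-term bounds
  have hbnonneg : ∀ i ∈ Finset.Icc 1 n, 0 ≤ lam n i / (τ2 + σ2 * lam n i) := by
    intro i hi
    simp only [Finset.mem_Icc] at hi
    have hl := hpos n i hi.1 hi.2
    positivity
  have hbσ : ∀ i ∈ Finset.Icc 1 n, lam n i / (τ2 + σ2 * lam n i) ≤ 1 / σ2 := by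
    intro i hi
    simp only [Finset.mem_Icc] at hi
    have hl := hpos n i hi.1 hi.2
    rw [div_le_div_iff₀ (by positivity) hσ]
    nlinarith
  -- main sum bound
  have hmain : ∑ i ∈ Finset.Icc 1 n, lam n i / (τ2 + σ2 * lam n i)
      ≤ K * (n : ℝ) ^ (1 / α) := by
    have hsplit : Finset.Icc 1 n = Finset.Ioc 0 m ∪ Finset.Ioc m n := by
      rw [Finset.Ioc_union_Ioc_eq_Ioc (Nat.zero_le m) hmn, ← Finset.Icc_add_one_left_eq_Ioc]; rfl
    have hdisj : Disjoint (Finset.Ioc 0 m) (Finset.Ioc m n) := by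
      rw [Finset.disjoint_left]
      intro a ha hb
      simp only [Finset.mem_Ioc] at ha hb
      omega
    rw [hsplit, Finset.sum_union hdisj]
    have hsub1 : ∀ i ∈ Finset.Ioc 0 m, i ∈ Finset.Icc 1 n := by
      intro i hi; simp only [Finset.mem_Ioc] at hi; simp only [Finset.mem_Icc]; omega
    have h1 : ∑ i ∈ Finset.Ioc 0 m, lam n i / (τ2 + σ2 * lam n i) ≤ (m:ℝ) / σ2 := by
      calc ∑ i ∈ Finset.Ioc 0 m, lam n i / (τ2 + σ2 * lam n i)
          ≤ ∑ _i ∈ Finset.Ioc 0 m, (1 / σ2) :=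
            Finset.sum_le_sum (fun i hi => hbσ i (hsub1 i hi))
        _ = (m:ℝ) / σ2 := by
            rw [Finset.sum_const, Nat.card_Ioc]
            simp [div_eq_mul_inv, mul_comm]
    have h2 : ∑ i ∈ Finset.Ioc m n, lam n i / (τ2 + σ2 * lam n i)
        ≤ (C * n / τ2) * ((m : ℝ) ^ (1 - α) / (α - 1)) := by
      calc ∑ i ∈ Finset.Ioc m n, lam n i / (τ2 + σ2 * lam n i)
          ≤ ∑ i ∈ Finset.Ioc m n, (C * n / τ2) * (i:ℝ) ^ (-α) := by
            apply Finset.sum_le_sum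
            intro i hi
            simp only [Finset.mem_Ioc] at hi
            have hi1 : 1 ≤ i := by omega
            have hl := hpos n i hi1 hi.2
            have hu := hub n i hi1 hi.2
            have hip : (0:ℝ) < (i:ℝ) ^ (-α) := Real.rpow_pos_of_pos (by exact_mod_cast hi1) _
            rw [div_le_iff₀ (by positivity)]
            calc lam n i ≤ C * n * (i:ℝ) ^ (-α) := hu
              _ ≤ C * n / τ2 * (i:ℝ)^(-α) * (τ2 + σ2 * lam n i) := by
                  rw [div_mul_eq_mul_div, div_mul_eq_mul_div, le_div_iff₀ hτ]
                  have : 0 ≤ σ2 * lam n i := by positivity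
                  nlinarith [mul_pos (mul_pos hC hn0) hip]
        _ = (C * n / τ2) * ∑ i ∈ Finset.Ioc m n, (i:ℝ) ^ (-α) := by
            rw [Finset.mul_sum]
        _ ≤ (C * n / τ2) * ((m : ℝ) ^ (1 - α) / (α - 1)) := by
            apply mul_le_mul_of_nonneg_left (tail_sum_le α hα m n hm1 hmn)
            positivity
    have hm1α : (m : ℝ) ^ (1 - α) ≤ ((n:ℝ) ^ (1/α)) ^ (1 - α) :=
      Real.rpow_le_rpow_of_nonpos hx0 hmlb (by linarith)
    have hnid : (n:ℝ) * ((n:ℝ) ^ (1/α)) ^ (1 - α) = (n:ℝ) ^ (1/α) := by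
      rw [← Real.rpow_mul (le_of_lt hn0)]
      nth_rewrite 1 [← Real.rpow_one (n:ℝ)]
      rw [← Real.rpow_add hn0]
      congr 1
      field_simp
      ring
    have h3 : (C * n / τ2) * ((m:ℝ) ^ (1 - α) / (α - 1))
        ≤ C / (τ2 * (α - 1)) * (n:ℝ) ^ (1/α) := by
      have heq : (C * n / τ2) * (((n:ℝ) ^ (1/α)) ^ (1 - α) / (α - 1))
          = C / (τ2 * (α - 1)) * ((n:ℝ) * ((n:ℝ) ^ (1/α)) ^ (1 - α)) := by
        field_simp
      calc (C * n / τ2) * ((m:ℝ) ^ (1 - α) / (α - 1))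
          ≤ (C * n / τ2) * (((n:ℝ) ^ (1/α)) ^ (1 - α) / (α - 1)) := by
            apply mul_le_mul_of_nonneg_left _ (by positivity)
            exact div_le_div_of_nonneg_right hm1α (by linarith)
        _ = C / (τ2 * (α - 1)) * ((n:ℝ) * ((n:ℝ) ^ (1/α)) ^ (1 - α)) := heq
        _ = C / (τ2 * (α - 1)) * (n:ℝ) ^ (1/α) := by rw [hnid]
    have h1' : (m:ℝ) / σ2 ≤ 2 / σ2 * (n:ℝ) ^ (1/α) := by
      rw [div_mul_eq_mul_div]
      exact div_le_div_of_nonneg_right hmub hσ.le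
    have hKX : K * (n:ℝ) ^ (1/α)
        = 2 / σ2 * (n:ℝ) ^ (1/α) + C / (τ2 * (α - 1)) * (n:ℝ) ^ (1/α) := by
      rw [hK]; ring
    linarith
  constructor
  · calc ∑ i ∈ Finset.Icc 1 n, lam n i / (τ2 + σ2 * lam n i)
        ≤ K * (n:ℝ) ^ (1/α) := hmain
      _ ≤ K * (1 + 1 / σ2) * (n:ℝ) ^ (1/α) := by
          apply mul_le_mul_of_nonneg_right _ (le_of_lt hx0)
          have hid : K * (1 + 1 / σ2) = K + K * (1 / σ2) := by ring
          have := mul_pos hKpos (one_div_pos.mpr hσ)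
          linarith
  · have hsq : ∑ i ∈ Finset.Icc 1 n, (lam n i / (τ2 + σ2 * lam n i)) ^ 2
        ≤ (1 / σ2) * ∑ i ∈ Finset.Icc 1 n, lam n i / (τ2 + σ2 * lam n i) := by
      rw [Finset.mul_sum]
      apply Finset.sum_le_sum
      intro i hi
      rw [sq]
      exact mul_le_mul_of_nonneg_right (hbσ i hi) (hbnonneg i hi)
    calc ∑ i ∈ Finset.Icc 1 n, (lam n i / (τ2 + σ2 * lam n i)) ^ 2
        ≤ (1 / σ2) * (K * (n:ℝ) ^ (1/α)) := by
          refine hsq.trans ?_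
          exact mul_le_mul_of_nonneg_left hmain (by positivity)
      _ ≤ K * (1 + 1 / σ2) * (n:ℝ) ^ (1/α) := by
          have hid : K * (1 + 1 / σ2) * (n:ℝ) ^ (1/α)
              = K * (n:ℝ) ^ (1/α) + 1 / σ2 * (K * (n:ℝ) ^ (1/α)) := by ring
          have h0 : (0:ℝ) ≤ K * (n:ℝ) ^ (1/α) := mul_nonneg hKpos.le hx0.le
          linarith
end

section
/- Let $\tau^2 > 0$, $\sigma^2 > 0$, $\alpha > 1$, and suppose the sequence satisfies the two-sided bound $c\, n i^{-\alpha} \le \lambda_i^{(n)} \le C n i^{-\alpha}$ for all $1 \le i \le n$ with constants $0 < c \le C$. With $b_{ni} = \lambda_i^{(n)}/(\tau^2 + \sigma^2 \lambda_i^{(n)})$, there exist constants $0 < c_1 \le c_2$ such that $c_1 n^{1/\alpha} \le \sum_{i=1}^n b_{ni}^2 \le c_2 n^{1/\alpha}$ and $c_1 n^{1/\alpha} \le \sum_{i=1}^n b_{ni} \le c_2 n^{1/\alpha}$ for all sufficiently large $n$. -/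
open Finset Filter Real

lemma key_ineq {β : ℝ} (hβ : 0 < β) {x : ℝ} (hx : 1 ≤ x) :
    β * (x+1) ^ (-(β+1)) ≤ x ^ (-β) - (x+1) ^ (-β) := by
  have hx0 : 0 < x := lt_of_lt_of_le one_pos hx
  have hx1 : 0 < x + 1 := by linarith
  set t := β / (x+1) with ht
  have ht0 : 0 < t := div_pos hβ hx1
  set r := x / (x+1) with hr
  have hr0 : 0 < r := div_pos hx0 hx1
  have hr1 : r ≤ exp (-(x+1)⁻¹) := by
    have h := Real.add_one_le_exp (-(x+1)⁻¹)
    have h' : 1 - (x+1)⁻¹ ≤ exp (-(x+1)⁻¹) := by linarith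
    have : r = 1 - (x+1)⁻¹ := by rw [hr]; field_simp; ring
    linarith
  have hrb : r ^ β ≤ exp (-t) := by
    calc r ^ β ≤ (exp (-(x+1)⁻¹)) ^ β := Real.rpow_le_rpow hr0.le hr1 hβ.le
    _ = exp (-t) := by
        rw [← Real.exp_mul]
        congr 1
        rw [ht]; field_simp
  have h1t : (1 + t) * r ^ β ≤ 1 := by
    have h2 : (1+t) * exp (-t) ≤ 1 := by
      have h3 := Real.add_one_le_exp t
      have h4 : (1+t) * exp (-t) ≤ exp t * exp (-t) := by
        apply mul_le_mul_of_nonneg_right _ (exp_nonneg _); linarith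
      rwa [← Real.exp_add, add_neg_cancel, Real.exp_zero] at h4
    calc (1+t) * r^β ≤ (1+t) * exp (-t) := by
          apply mul_le_mul_of_nonneg_left hrb; linarith
    _ ≤ 1 := h2
  have hxb : (x+1) ^ (-β) = x ^ (-β) * r ^ β := by
    rw [hr, Real.div_rpow hx0.le hx1.le, Real.rpow_neg hx0.le, Real.rpow_neg hx1.le]
    field_simp
  have hta : t * (x+1) ^ (-β) = β * (x+1) ^ (-(β+1)) := by
    rw [ht, show -(β+1) = -β + (-1) by ring, Real.rpow_add hx1, Real.rpow_neg_one]
    field_simp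
  rw [← hta, hxb]
  have hxnb : 0 < x ^ (-β) := Real.rpow_pos_of_pos hx0 _
  nlinarith [mul_le_mul_of_nonneg_left h1t hxnb.le]

lemma tail_sum {β : ℝ} (hβ : 0 < β) {m : ℕ} (hm : 1 ≤ m) {n : ℕ} (hmn : m ≤ n) :
    β * ∑ i ∈ Finset.Ioc m n, (i:ℝ) ^ (-(β+1)) ≤ (m:ℝ) ^ (-β) := by
  have key : β * ∑ i ∈ Finset.Ioc m n, (i:ℝ) ^ (-(β+1)) ≤ (m:ℝ) ^ (-β) - (n:ℝ) ^ (-β) := by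
    induction n, hmn using Nat.le_induction with
    | base => simp
    | succ n hmn ih =>
      rw [Finset.sum_Ioc_succ_top hmn]
      have hn1 : (1:ℝ) ≤ (n:ℝ) := by exact_mod_cast le_trans hm hmn
      have hk := key_ineq hβ hn1
      push_cast
      ring_nf
      ring_nf at ih hk
      linarith
  have : (0:ℝ) ≤ (n:ℝ) ^ (-β) := Real.rpow_nonneg (Nat.cast_nonneg n) _
  linarith

set_option maxHeartbeats 1000000 in
/-- under the two-sided eigenvalue bound `c n i^(-α) ≤ λᵢ ≤ C n i^(-α)`,
both `∑ bₙᵢ` and `∑ bₙᵢ²` are of exact order `n^(1/α)` for large `n`. -/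
theorem stmt3
    (τ2 σ2 α : ℝ) (hτ : 0 < τ2) (hσ : 0 < σ2) (hα : 1 < α)
    (lam : ℕ → ℕ → ℝ)
    (c C : ℝ) (hc : 0 < c) (hcC : c ≤ C)
    (hlb : ∀ (n i : ℕ), 1 ≤ i → i ≤ n → c * (n : ℝ) * (i : ℝ) ^ (-α) ≤ lam n i)
    (hub : ∀ n i, 1 ≤ i → i ≤ n → lam n i ≤ C * n * (i : ℝ) ^ (-α)) :
    ∃ c₁ c₂ : ℝ, 0 < c₁ ∧ c₁ ≤ c₂ ∧
      ∀ᶠ n : ℕ in atTop,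
        (c₁ * (n : ℝ) ^ (1 / α)
          ≤ ∑ i ∈ Finset.Icc 1 n, (lam n i / (τ2 + σ2 * lam n i)) ^ 2) ∧
        (∑ i ∈ Finset.Icc 1 n, (lam n i / (τ2 + σ2 * lam n i)) ^ 2
          ≤ c₂ * (n : ℝ) ^ (1 / α)) ∧
        (c₁ * (n : ℝ) ^ (1 / α)
          ≤ ∑ i ∈ Finset.Icc 1 n, lam n i / (τ2 + σ2 * lam n i)) ∧
        (∑ i ∈ Finset.Icc 1 n, lam n i / (τ2 + σ2 * lam n i)
          ≤ c₂ * (n : ℝ) ^ (1 / α)) := by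
  have hα0 : 0 < α := by linarith
  have hβ : 0 < α - 1 := by linarith
  have hC : 0 < C := lt_of_lt_of_le hc hcC
  set b0 : ℝ := c / (τ2 + σ2 * c) with hb0def
  have hden : 0 < τ2 + σ2 * c := by positivity
  have hb0 : 0 < b0 := div_pos hc hden
  set A : ℝ := 1/σ2 + C / (τ2 * (α-1)) with hA
  have hA0 : 0 < A := by rw [hA]; positivity
  set c1 : ℝ := min b0 (b0^2) / 2 with hc1
  have hmin0 : 0 < min b0 (b0^2) := lt_min hb0 (by positivity)
  have hc10 : 0 < c1 := by rw [hc1]; linarith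
  set c2 : ℝ := max c1 (2 * A * (1 + 1/σ2)) with hc2
  refine ⟨c1, c2, hc10, le_max_left _ _, ?_⟩
  have htend : Tendsto (fun n : ℕ => ((n:ℝ)) ^ (1/α)) atTop atTop :=
    (tendsto_rpow_atTop (by positivity)).comp tendsto_natCast_atTop_atTop
  filter_upwards [htend.eventually_ge_atTop 2, eventually_ge_atTop 1] with n h2 hn1
  set u := ((n:ℝ)) ^ (1/α) with hu
  have hn0 : (0:ℝ) < n := by exact_mod_cast hn1
  have hn1R : (1:ℝ) ≤ n := by exact_mod_cast hn1
  have hu0 : 0 < u := Real.rpow_pos_of_pos hn0 _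
  have hu2 : (2:ℝ) ≤ u := h2
  have huα : u ^ α = (n:ℝ) := by
    rw [hu, ← Real.rpow_mul hn0.le, one_div_mul_cancel (ne_of_gt hα0), Real.rpow_one]
  have hun : u ≤ (n:ℝ) := by
    calc u ≤ (n:ℝ) ^ (1:ℝ) :=
          Real.rpow_le_rpow_of_exponent_le hn1R ((div_le_one hα0).mpr hα.le)
    _ = n := Real.rpow_one _
  set m' := ⌊u⌋₊ with hm'def
  set m := ⌈u⌉₊ with hmdef
  have hm'1 : 1 ≤ m' := Nat.le_floor (by push_cast; linarith)
  have hm'u : (m':ℝ) ≤ u := Nat.floor_le hu0.le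
  have hum' : u/2 ≤ (m':ℝ) := by
    have := Nat.sub_one_lt_floor u
    linarith
  have hm'n : m' ≤ n := by exact_mod_cast le_trans hm'u hun
  have hum : u ≤ (m:ℝ) := Nat.le_ceil u
  have hm1 : 1 ≤ m := Nat.ceil_pos.mpr hu0
  have hmn : m ≤ n := Nat.ceil_le.mpr hun
  have hm0 : (0:ℝ) < m := lt_of_lt_of_le hu0 hum
  have hm2u : (m:ℝ) ≤ 2*u := by
    have := Nat.ceil_lt_add_one hu0.le
    linarith
  -- pointwise facts
  have hL0 : ∀ i, 1 ≤ i → i ≤ n → 0 ≤ lam n i := by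
    intro i h1 h2
    refine le_trans ?_ (hlb n i h1 h2)
    positivity
  have hd : ∀ i, 1 ≤ i → i ≤ n → 0 < τ2 + σ2 * lam n i := by
    intro i h1 h2
    have := hL0 i h1 h2
    nlinarith
  have hbnn : ∀ i, 1 ≤ i → i ≤ n → 0 ≤ lam n i / (τ2 + σ2 * lam n i) := fun i h1 h2 =>
    div_nonneg (hL0 i h1 h2) (hd i h1 h2).le
  have hble : ∀ i, 1 ≤ i → i ≤ n → lam n i / (τ2 + σ2 * lam n i) ≤ 1/σ2 := by
    intro i h1 h2
    rw [div_le_div_iff₀ (hd i h1 h2) hσ]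
    have := hL0 i h1 h2
    nlinarith
  -- lower bound on first m' terms
  have hbl : ∀ i ∈ Finset.Icc 1 m', b0 ≤ lam n i / (τ2 + σ2 * lam n i) := by
    intro i hi
    rw [Finset.mem_Icc] at hi
    obtain ⟨h1, h2⟩ := hi
    have hin : i ≤ n := le_trans h2 hm'n
    have hi1R : (1:ℝ) ≤ i := by exact_mod_cast h1
    have hi0 : (0:ℝ) < i := by linarith
    have hia : (i:ℝ) ^ α ≤ (n:ℝ) := by
      calc (i:ℝ)^α ≤ u^α :=
            Real.rpow_le_rpow hi0.le (le_trans (by exact_mod_cast h2) hm'u) hα0.le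
      _ = n := huα
    have hiapos : 0 < (i:ℝ)^α := Real.rpow_pos_of_pos hi0 _
    have hinv : 1/(n:ℝ) ≤ (i:ℝ)^(-α) := by
      rw [Real.rpow_neg hi0.le, one_div]
      exact inv_anti₀ hiapos hia
    have hlgec : c ≤ lam n i := by
      refine le_trans ?_ (hlb n i h1 hin)
      calc c = c * (n:ℝ) * (1/(n:ℝ)) := by field_simp
      _ ≤ c * n * (i:ℝ)^(-α) := mul_le_mul_of_nonneg_left hinv (by positivity)
    rw [hb0def, div_le_div_iff₀ hden (hd i h1 hin)]
    nlinarith [mul_le_mul_of_nonneg_right hlgec hτ.le]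
  have hm'card : (Finset.Icc 1 m').card = m' := by simp
  have hlowsum : (m':ℝ) * b0 ≤ ∑ i ∈ Finset.Icc 1 m', lam n i / (τ2 + σ2 * lam n i) := by
    have := Finset.card_nsmul_le_sum (Finset.Icc 1 m') _ b0 hbl
    rwa [hm'card, nsmul_eq_mul] at this
  have hlowsum2 : (m':ℝ) * b0^2 ≤ ∑ i ∈ Finset.Icc 1 m', (lam n i / (τ2 + σ2 * lam n i))^2 := by
    have hsq : ∀ i ∈ Finset.Icc 1 m', b0^2 ≤ (lam n i / (τ2 + σ2 * lam n i))^2 := by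
      intro i hi
      exact pow_le_pow_left₀ hb0.le (hbl i hi) 2
    have := Finset.card_nsmul_le_sum (Finset.Icc 1 m') _ (b0^2) hsq
    rwa [hm'card, nsmul_eq_mul] at this
  have hsub : Finset.Icc 1 m' ⊆ Finset.Icc 1 n := Finset.Icc_subset_Icc_right hm'n
  have hext : ∑ i ∈ Finset.Icc 1 m', lam n i / (τ2 + σ2 * lam n i)
      ≤ ∑ i ∈ Finset.Icc 1 n, lam n i / (τ2 + σ2 * lam n i) := by
    apply Finset.sum_le_sum_of_subset_of_nonneg hsub
    intro i hi _
    rw [Finset.mem_Icc] at hi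
    exact hbnn i hi.1 hi.2
  have hext2 : ∑ i ∈ Finset.Icc 1 m', (lam n i / (τ2 + σ2 * lam n i))^2
      ≤ ∑ i ∈ Finset.Icc 1 n, (lam n i / (τ2 + σ2 * lam n i))^2 := by
    apply Finset.sum_le_sum_of_subset_of_nonneg hsub
    intro i hi _
    positivity
  -- upper bound
  have hIcc : Finset.Icc 1 n = Finset.Ioc 0 n := Finset.Icc_add_one_left_eq_Ioc 0 n
  have hsplit : ∑ i ∈ Finset.Icc 1 n, lam n i / (τ2 + σ2 * lam n i)
      = ∑ i ∈ Finset.Ioc 0 m, lam n i / (τ2 + σ2 * lam n i)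
        + ∑ i ∈ Finset.Ioc m n, lam n i / (τ2 + σ2 * lam n i) := by
    rw [hIcc, Finset.sum_Ioc_consecutive _ (Nat.zero_le m) hmn]
  have hhead : ∑ i ∈ Finset.Ioc 0 m, lam n i / (τ2 + σ2 * lam n i) ≤ (m:ℝ) * (1/σ2) := by
    have hb : ∀ i ∈ Finset.Ioc 0 m, lam n i / (τ2 + σ2 * lam n i) ≤ 1/σ2 := by
      intro i hi
      rw [Finset.mem_Ioc] at hi
      exact hble i hi.1 (le_trans hi.2 hmn)
    have := Finset.sum_le_card_nsmul (Finset.Ioc 0 m) _ (1/σ2) hb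
    rwa [Nat.card_Ioc, Nat.sub_zero, nsmul_eq_mul] at this
  have htail1 : ∀ i ∈ Finset.Ioc m n, lam n i / (τ2 + σ2 * lam n i)
      ≤ (C * (n:ℝ) / τ2) * (i:ℝ)^(-α) := by
    intro i hi
    rw [Finset.mem_Ioc] at hi
    have h1 : 1 ≤ i := le_trans hm1 hi.1.le
    have hub' := hub n i h1 hi.2
    have hd' := hd i h1 hi.2
    have hL0' := hL0 i h1 hi.2
    rw [show (C * (n:ℝ) / τ2) * (i:ℝ)^(-α) = (C * (n:ℝ) * (i:ℝ)^(-α)) / τ2 by ring,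
      div_le_div_iff₀ hd' hτ]
    nlinarith [mul_le_mul_of_nonneg_right hub' hτ.le,
      mul_nonneg (mul_nonneg hσ.le hL0') (le_trans hL0' hub')]
  have htsum : (α - 1) * ∑ i ∈ Finset.Ioc m n, (i:ℝ)^(-α) ≤ (m:ℝ)^(-(α-1)) := by
    have := tail_sum hβ hm1 hmn
    have hexp : ∀ i ∈ Finset.Ioc m n, (i:ℝ)^(-(α-1+1)) = (i:ℝ)^(-α) := by
      intro i _
      norm_num
    rwa [Finset.sum_congr rfl hexp] at this
  have htailpos : (0:ℝ) ≤ ∑ i ∈ Finset.Ioc m n, (i:ℝ)^(-α) := by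
    apply Finset.sum_nonneg
    intro i _
    positivity
  have hnm : (n:ℝ) ≤ (m:ℝ)^α := by
    calc (n:ℝ) = u^α := huα.symm
    _ ≤ (m:ℝ)^α := Real.rpow_le_rpow hu0.le hum hα0.le
  have hkey : (n:ℝ) * (m:ℝ)^(-(α-1)) ≤ (m:ℝ) := by
    have h1 : (m:ℝ)^(-(α-1)) = (m:ℝ)^(-α) * m := by
      rw [show -(α-1) = -α + 1 by ring, Real.rpow_add hm0, Real.rpow_one]
    have h2 : (m:ℝ)^(-α) ≤ ((n:ℝ))⁻¹ := by
      rw [Real.rpow_neg hm0.le]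
      exact inv_anti₀ hn0 hnm
    calc (n:ℝ) * (m:ℝ)^(-(α-1)) = ((n:ℝ) * (m:ℝ)^(-α)) * m := by rw [h1]; ring
    _ ≤ ((n:ℝ) * (n:ℝ)⁻¹) * m := by
        apply mul_le_mul_of_nonneg_right _ hm0.le
        exact mul_le_mul_of_nonneg_left h2 hn0.le
    _ = m := by field_simp
  have htail : ∑ i ∈ Finset.Ioc m n, lam n i / (τ2 + σ2 * lam n i)
      ≤ (C / (τ2 * (α-1))) * m := by
    calc ∑ i ∈ Finset.Ioc m n, lam n i / (τ2 + σ2 * lam n i)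
        ≤ ∑ i ∈ Finset.Ioc m n, (C * (n:ℝ) / τ2) * (i:ℝ)^(-α) := Finset.sum_le_sum htail1
    _ = (C * (n:ℝ) / τ2) * ∑ i ∈ Finset.Ioc m n, (i:ℝ)^(-α) := by rw [Finset.mul_sum]
    _ ≤ (C * (n:ℝ) / τ2) * ((m:ℝ)^(-(α-1)) / (α-1)) := by
        apply mul_le_mul_of_nonneg_left _ (by positivity)
        rw [le_div_iff₀ hβ]
        linarith
    _ = (C / (τ2 * (α-1))) * ((n:ℝ) * (m:ℝ)^(-(α-1))) := by
        field_simp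
    _ ≤ (C / (τ2 * (α-1))) * m := by
        apply mul_le_mul_of_nonneg_left hkey (by positivity)
  have hS1 : ∑ i ∈ Finset.Icc 1 n, lam n i / (τ2 + σ2 * lam n i) ≤ 2 * A * u := by
    rw [hsplit]
    calc ∑ i ∈ Finset.Ioc 0 m, lam n i / (τ2 + σ2 * lam n i)
          + ∑ i ∈ Finset.Ioc m n, lam n i / (τ2 + σ2 * lam n i)
        ≤ (m:ℝ) * (1/σ2) + (C / (τ2 * (α-1))) * m := add_le_add hhead htail
    _ = A * m := by rw [hA]; ring
    _ ≤ A * (2*u) := mul_le_mul_of_nonneg_left hm2u hA0.le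
    _ = 2 * A * u := by ring
  have hS2 : ∑ i ∈ Finset.Icc 1 n, (lam n i / (τ2 + σ2 * lam n i))^2
      ≤ (1/σ2) * (2 * A * u) := by
    calc ∑ i ∈ Finset.Icc 1 n, (lam n i / (τ2 + σ2 * lam n i))^2
        ≤ ∑ i ∈ Finset.Icc 1 n, (1/σ2) * (lam n i / (τ2 + σ2 * lam n i)) := by
          apply Finset.sum_le_sum
          intro i hi
          rw [Finset.mem_Icc] at hi
          have h1 := hbnn i hi.1 hi.2
          have h2 := hble i hi.1 hi.2
          nlinarith
    _ = (1/σ2) * ∑ i ∈ Finset.Icc 1 n, lam n i / (τ2 + σ2 * lam n i) := by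
          rw [Finset.mul_sum]
    _ ≤ (1/σ2) * (2 * A * u) := mul_le_mul_of_nonneg_left hS1 (by positivity)
  have hc2A : 2 * A * (1 + 1/σ2) ≤ c2 := le_max_right _ _
  refine ⟨?_, ?_, ?_, ?_⟩
  · calc c1 * u ≤ (b0^2/2) * u := by
          apply mul_le_mul_of_nonneg_right _ hu0.le
          rw [hc1]
          have := min_le_right b0 (b0^2)
          linarith
    _ = b0^2 * (u/2) := by ring
    _ ≤ b0^2 * m' := mul_le_mul_of_nonneg_left hum' (by positivity)
    _ = (m':ℝ) * b0^2 := by ring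
    _ ≤ _ := le_trans hlowsum2 hext2
  · calc ∑ i ∈ Finset.Icc 1 n, (lam n i / (τ2 + σ2 * lam n i))^2
        ≤ (1/σ2) * (2 * A * u) := hS2
    _ ≤ (2 * A * (1 + 1/σ2)) * u := by nlinarith
    _ ≤ c2 * u := mul_le_mul_of_nonneg_right hc2A hu0.le
  · calc c1 * u ≤ (b0/2) * u := by
          apply mul_le_mul_of_nonneg_right _ hu0.le
          rw [hc1]
          have := min_le_left b0 (b0^2)
          linarith
    _ = b0 * (u/2) := by ring
    _ ≤ b0 * m' := mul_le_mul_of_nonneg_left hum' hb0.le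
    _ = (m':ℝ) * b0 := by ring
    _ ≤ _ := le_trans hlowsum hext
  · calc ∑ i ∈ Finset.Icc 1 n, lam n i / (τ2 + σ2 * lam n i)
        ≤ 2 * A * u := hS1
    _ ≤ (2 * A * (1 + 1/σ2)) * u := by nlinarith
    _ ≤ c2 * u := mul_le_mul_of_nonneg_right hc2A hu0.le
end

section
/- Let $\tau^2 > 0$, $\sigma^2 > 0$, $\alpha > 1$, and suppose $\lambda_i^{(n)} \le C n i^{-\alpha}$ for all $1 \le i \le n$. With $a_{ni} = 1/(\tau^2 + \sigma^2\lambda_i^{(n)})$, there exists $C' > 0$ such that $\sum_{i=1}^n (\lambda_i^{(n)})^2 a_{ni}^4 \le C' n^{1/\alpha}$ for all $n$. -/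
open Finset

/-- `∑ (λᵢ)² aₙᵢ⁴ ≤ C' n^(1/α)` with `aₙᵢ = 1/(τ² + σ² λᵢ)`,
under the eigenvalue bound `λᵢ ≤ C n i^(-α)`. -/
theorem stmt4
    (τ2 σ2 α : ℝ) (hτ : 0 < τ2) (hσ : 0 < σ2) (hα : 1 < α)
    (lam : ℕ → ℕ → ℝ)
    (hpos : ∀ n i, 1 ≤ i → i ≤ n → 0 < lam n i)
    (C : ℝ) (hC : 0 < C)
    (hub : ∀ n i, 1 ≤ i → i ≤ n → lam n i ≤ C * n * (i : ℝ) ^ (-α)) :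
    ∃ C' : ℝ, 0 < C' ∧ ∀ n : ℕ,
      ∑ i ∈ Finset.Icc 1 n, (lam n i) ^ 2 * (1 / (τ2 + σ2 * lam n i)) ^ 4
        ≤ C' * (n : ℝ) ^ (1 / α) := by
  have hα0 : (0 : ℝ) < α := by linarith
  set B : ℝ := (1 / σ2) ^ 2 * (1 / τ2) ^ 2 with hB
  have hBpos : 0 < B := by positivity
  refine ⟨2 * B + C ^ 2 / τ2 ^ 4, by positivity, fun n => ?_⟩
  rcases Nat.eq_zero_or_pos n with rfl | hn
  · have he : Finset.Icc 1 0 = (∅ : Finset ℕ) := by simp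
    rw [he, Finset.sum_empty, Nat.cast_zero,
      Real.zero_rpow (one_div_ne_zero (ne_of_gt hα0)), mul_zero]
  have hN : (1 : ℝ) ≤ (n : ℝ) := by exact_mod_cast hn
  have hNpos : (0 : ℝ) < (n : ℝ) := by linarith
  set r : ℝ := (n : ℝ) ^ (1 / α) with hr
  have hr1 : 1 ≤ r := Real.one_le_rpow hN (by positivity)
  have hrpos : 0 < r := by linarith
  set m : ℕ := ⌈r⌉₊ with hm
  have hrm : r ≤ (m : ℝ) := Nat.le_ceil r
  have hm2 : (m : ℝ) ≤ 2 * r := by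
    have := Nat.ceil_lt_add_one (le_of_lt hrpos)
    have : (m : ℝ) < r + 1 := this
    linarith
  have hm1 : 1 ≤ m := by
    have : (0 : ℝ) < m := lt_of_lt_of_le hrpos hrm
    exact_mod_cast Nat.one_le_iff_ne_zero.mpr (by exact_mod_cast this.ne')
  -- per-term bound 1 (uniform)
  have key1 : ∀ i ∈ Finset.Icc 1 n,
      (lam n i) ^ 2 * (1 / (τ2 + σ2 * lam n i)) ^ 4 ≤ B := by
    intro i hi
    simp only [Finset.mem_Icc] at hi
    have hl := hpos n i hi.1 hi.2
    have hD : 0 < τ2 + σ2 * lam n i := by positivity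
    have h1 : lam n i / (τ2 + σ2 * lam n i) ≤ 1 / σ2 := by
      rw [div_le_div_iff₀ hD hσ]
      nlinarith
    have h2 : 1 / (τ2 + σ2 * lam n i) ≤ 1 / τ2 := by
      have := mul_pos hσ hl
      apply one_div_le_one_div_of_le hτ; linarith
    have e : (lam n i) ^ 2 * (1 / (τ2 + σ2 * lam n i)) ^ 4
        = (lam n i / (τ2 + σ2 * lam n i)) ^ 2 * (1 / (τ2 + σ2 * lam n i)) ^ 2 := by
      field_simp
    rw [e, hB]
    have p1 : 0 ≤ lam n i / (τ2 + σ2 * lam n i) := by positivity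
    have p2 : (0:ℝ) ≤ 1 / (τ2 + σ2 * lam n i) := by positivity
    exact mul_le_mul (pow_le_pow_left₀ p1 h1 2) (pow_le_pow_left₀ p2 h2 2)
      (by positivity) (by positivity)
  -- per-term bound 2 (tail)
  have key2 : ∀ i ∈ Finset.Ioc m n,
      (lam n i) ^ 2 * (1 / (τ2 + σ2 * lam n i)) ^ 4
        ≤ C ^ 2 * (n : ℝ) ^ 2 / τ2 ^ 4 * r ^ (2 - 2 * α) * ((i : ℝ) ^ 2)⁻¹ := by
    intro i hi
    simp only [Finset.mem_Ioc] at hi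
    have hi1 : 1 ≤ i := le_trans hm1 (le_of_lt hi.1)
    have hl := hpos n i hi1 hi.2
    have hD : 0 < τ2 + σ2 * lam n i := by positivity
    have hipos : (0 : ℝ) < (i : ℝ) := by exact_mod_cast hi1
    have hir : r ≤ (i : ℝ) := by
      have : (m : ℝ) ≤ (i : ℝ) := by exact_mod_cast le_of_lt hi.1
      linarith
    have hub' := hub n i hi1 hi.2
    have h4 : (1 / (τ2 + σ2 * lam n i)) ^ 4 ≤ (1 / τ2) ^ 4 := by
      apply pow_le_pow_left₀ (by positivity)
      have := mul_pos hσ hl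
      apply one_div_le_one_div_of_le hτ; linarith
    have h2 : (lam n i) ^ 2 ≤ (C * n * (i : ℝ) ^ (-α)) ^ 2 :=
      pow_le_pow_left₀ (le_of_lt hl) hub' 2
    have step1 : (lam n i) ^ 2 * (1 / (τ2 + σ2 * lam n i)) ^ 4
        ≤ (C * n * (i : ℝ) ^ (-α)) ^ 2 * (1 / τ2) ^ 4 :=
      mul_le_mul h2 h4 (by positivity) (by positivity)
    refine step1.trans ?_
    -- rewrite and compare the i-powers
    have e1 : (C * n * (i : ℝ) ^ (-α)) ^ 2 * (1 / τ2) ^ 4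
        = C ^ 2 * (n : ℝ) ^ 2 / τ2 ^ 4 * ((i : ℝ) ^ (-α)) ^ 2 := by
      field_simp
    rw [e1]
    have e2 : ((i : ℝ) ^ (-α)) ^ 2 = (i : ℝ) ^ (2 - 2 * α) * ((i : ℝ) ^ 2)⁻¹ := by
      rw [← Real.rpow_natCast ((i:ℝ) ^ (-α)) 2, ← Real.rpow_mul (le_of_lt hipos),
        ← Real.rpow_natCast (i:ℝ) 2, ← Real.rpow_neg (le_of_lt hipos),
        ← Real.rpow_add hipos]
      norm_num
      ring_nf
    rw [e2, ← mul_assoc]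
    have h5 : (i : ℝ) ^ (2 - 2 * α) ≤ r ^ (2 - 2 * α) :=
      Real.rpow_le_rpow_of_nonpos hrpos hir (by linarith)
    have : C ^ 2 * (n : ℝ) ^ 2 / τ2 ^ 4 * (i : ℝ) ^ (2 - 2 * α)
        ≤ C ^ 2 * (n : ℝ) ^ 2 / τ2 ^ 4 * r ^ (2 - 2 * α) :=
      mul_le_mul_of_nonneg_left h5 (by positivity)
    exact mul_le_mul_of_nonneg_right this (by positivity)
  -- split the sum
  set k : ℕ := min m n with hk
  have hsplit : ∑ i ∈ Finset.Icc 1 n, (lam n i) ^ 2 * (1 / (τ2 + σ2 * lam n i)) ^ 4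
      = ∑ i ∈ Finset.Ioc 0 k, (lam n i) ^ 2 * (1 / (τ2 + σ2 * lam n i)) ^ 4
      + ∑ i ∈ Finset.Ioc k n, (lam n i) ^ 2 * (1 / (τ2 + σ2 * lam n i)) ^ 4 := by
    have h01 : Finset.Icc 1 n = Finset.Ioc 0 n := by
      rw [show (1:ℕ) = 0 + 1 from rfl, Finset.Icc_add_one_left_eq_Ioc]
    rw [h01]
    exact (Finset.sum_Ioc_consecutive _ (Nat.zero_le k) (min_le_right m n)).symm
  rw [hsplit]
  -- head bound
  have hhead : ∑ i ∈ Finset.Ioc 0 k, (lam n i) ^ 2 * (1 / (τ2 + σ2 * lam n i)) ^ 4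
      ≤ 2 * B * r := by
    have : ∑ i ∈ Finset.Ioc 0 k, (lam n i) ^ 2 * (1 / (τ2 + σ2 * lam n i)) ^ 4
        ≤ ∑ _i ∈ Finset.Ioc 0 k, B := by
      apply Finset.sum_le_sum
      intro i hi
      simp only [Finset.mem_Ioc] at hi
      exact key1 i (Finset.mem_Icc.mpr ⟨hi.1, le_trans hi.2 (min_le_right m n)⟩)
    refine this.trans ?_
    rw [Finset.sum_const, Nat.card_Ioc, Nat.sub_zero, nsmul_eq_mul]
    have : (k : ℝ) ≤ 2 * r := le_trans (by exact_mod_cast min_le_left m n) hm2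
    nlinarith
  -- tail bound
  have htail : ∑ i ∈ Finset.Ioc k n, (lam n i) ^ 2 * (1 / (τ2 + σ2 * lam n i)) ^ 4
      ≤ C ^ 2 / τ2 ^ 4 * r := by
    rcases le_or_gt n m with h | h
    · have : k = n := min_eq_right h
      rw [this]
      simp [Finset.Ioc_self]
      positivity
    · have hkm : k = m := min_eq_left (le_of_lt h)
      have step : ∑ i ∈ Finset.Ioc k n, (lam n i) ^ 2 * (1 / (τ2 + σ2 * lam n i)) ^ 4
          ≤ ∑ i ∈ Finset.Ioc k n,
            C ^ 2 * (n : ℝ) ^ 2 / τ2 ^ 4 * r ^ (2 - 2 * α) * ((i : ℝ) ^ 2)⁻¹ := by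
        apply Finset.sum_le_sum
        intro i hi
        rw [hkm] at hi
        exact key2 i hi
      refine step.trans ?_
      rw [← Finset.mul_sum]
      have hsum : ∑ i ∈ Finset.Ioc k n, ((i : ℝ) ^ 2)⁻¹ ≤ (k : ℝ)⁻¹ := by
        have := sum_Ioc_inv_sq_le_sub (α := ℝ) (k := k) (n := n)
          (by rw [hkm]; exact_mod_cast Nat.one_le_iff_ne_zero.mp hm1)
          (by rw [hkm]; exact le_of_lt h)
        have h2 := this
        have : ((k : ℝ))⁻¹ - ((n : ℝ))⁻¹ ≤ (k : ℝ)⁻¹ := by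
          have : (0:ℝ) ≤ ((n : ℝ))⁻¹ := by positivity
          linarith
        push_cast at h2 ⊢
        linarith
      have hkinv : (k : ℝ)⁻¹ ≤ r⁻¹ := by
        apply inv_anti₀ hrpos
        rw [hkm]; exact hrm
      have hKpos : (0 : ℝ) ≤ C ^ 2 * (n : ℝ) ^ 2 / τ2 ^ 4 * r ^ (2 - 2 * α) := by positivity
      have step2 : C ^ 2 * (n : ℝ) ^ 2 / τ2 ^ 4 * r ^ (2 - 2 * α)
            * ∑ i ∈ Finset.Ioc k n, ((i : ℝ) ^ 2)⁻¹
          ≤ C ^ 2 * (n : ℝ) ^ 2 / τ2 ^ 4 * r ^ (2 - 2 * α) * r⁻¹ :=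
        mul_le_mul_of_nonneg_left (hsum.trans hkinv) hKpos
      refine le_trans step2 ?_
      -- rpow algebra: n² * r^(2-2α) * r⁻¹ = r
      have e : (n : ℝ) ^ 2 * (r ^ (2 - 2 * α) * r⁻¹) = r := by
        rw [hr, ← Real.rpow_natCast (n:ℝ) 2, ← Real.rpow_mul (le_of_lt hNpos),
          ← Real.rpow_neg_one ((n:ℝ) ^ (1/α : ℝ)), ← Real.rpow_mul (le_of_lt hNpos),
          ← Real.rpow_add hNpos, ← Real.rpow_add hNpos]
        congr 1
        field_simp
        ring
      calc C ^ 2 * (n : ℝ) ^ 2 / τ2 ^ 4 * r ^ (2 - 2 * α) * r⁻¹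
          = C ^ 2 / τ2 ^ 4 * ((n : ℝ) ^ 2 * (r ^ (2 - 2 * α) * r⁻¹)) := by ring
        _ = C ^ 2 / τ2 ^ 4 * r := by rw [e]
        _ ≤ C ^ 2 / τ2 ^ 4 * r := le_rfl
  calc _ ≤ 2 * B * r + C ^ 2 / τ2 ^ 4 * r := add_le_add hhead htail
    _ = (2 * B + C ^ 2 / τ2 ^ 4) * r := by ring
end

section
/- Let $W_1, W_2, \ldots$ be i.i.d. standard normal random variables, and for each $n$ let $c_{n1}, \ldots, c_{nn}$ be nonnegative reals with $S_n := \sum_{i=1}^n c_{ni} \to \infty$ and $\max_{1 \le i \le n} c_{ni} \le M$ for a constant $M$. Then $\frac{1}{S_n} \sum_{i=1}^n c_{ni} W_i^2 \to 1$ almost surely, provided $S_n \ge \delta n^{\gamma}$ for some $\delta, \gamma > 0$. -/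
open MeasureTheory ProbabilityTheory Filter Finset

open scoped ENNReal NNReal

section Aux
open Real Asymptotics


lemma sqrt_inv_le_exp {u : ℝ} (hu : |u| ≤ 1/4) :
    (Real.sqrt (1 - 2*u))⁻¹ ≤ rexp (u + 4*u^2) := by
  have hu1 : -(1/4) ≤ u := neg_le_of_abs_le hu
  have hu2 : u ≤ 1/4 := le_of_abs_le hu
  have h0 : (0:ℝ) < 1 - 2*u := by linarith
  rw [inv_le_iff_one_le_mul₀' (Real.sqrt_pos.mpr h0)]
  have h1 : rexp (-(u + 4*u^2)) ≤ Real.sqrt (1 - 2*u) := by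
    rw [Real.le_sqrt (exp_nonneg _) ] <;> try linarith
    have e1 : rexp (-(u + 4*u^2)) ^ 2 = rexp (-(2*u + 8*u^2)) := by
      rw [← Real.exp_nat_mul]; norm_num; ring_nf
    rw [e1, Real.exp_neg]
    have h2 : (0:ℝ) < 1 + (2*u + 8*u^2) := by nlinarith
    have h3 : 1 + (2*u + 8*u^2) ≤ rexp (2*u + 8*u^2) := by
      have := Real.add_one_le_exp (2*u + 8*u^2); linarith
    calc (rexp (2*u + 8*u^2))⁻¹ ≤ (1 + (2*u + 8*u^2))⁻¹ := by
          exact inv_anti₀ h2 h3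
      _ ≤ 1 - 2*u := by
          rw [inv_le_iff_one_le_mul₀' h2]; nlinarith
  calc (1:ℝ) = rexp (-(u+4*u^2)) * rexp (u+4*u^2) := by rw [← Real.exp_add, show (-(u+4*u^2) + (u+4*u^2)) = 0 by ring, Real.exp_zero]
    _ ≤ Real.sqrt (1 - 2*u) * rexp (u + 4*u^2) :=
        mul_le_mul_of_nonneg_right h1 (exp_nonneg _)


lemma gaussPDF_eq (x : ℝ) : gaussianPDFReal 0 1 x = (√(2 * π))⁻¹ * rexp (-(1/2) * x^2) := by
  simp only [gaussianPDFReal, NNReal.coe_one, mul_one, sub_zero]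
  ring_nf

lemma gauss_smul_eq (s : ℝ) :
    (fun x => (gaussianPDFReal 0 1 x).toNNReal • rexp (s * x^2))
      = fun x => (√(2 * π))⁻¹ * rexp (-(1/2 - s) * x^2) := by
  funext x
  rw [NNReal.smul_def, Real.coe_toNNReal _ (gaussianPDFReal_nonneg 0 1 x), gaussPDF_eq,
    smul_eq_mul, mul_assoc, ← Real.exp_add]
  ring_nf

lemma gauss_withDensity :
    gaussianReal 0 1 = volume.withDensity (fun x => ((gaussianPDFReal 0 1 x).toNNReal : ℝ≥0∞)) := by
  rw [gaussianReal_of_var_ne_zero 0 one_ne_zero]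
  rfl

lemma gauss_sq_integral {s : ℝ} (hs : s < 1/2) :
    ∫ x, rexp (s * x^2) ∂(gaussianReal 0 1) = (Real.sqrt (1 - 2*s))⁻¹ := by
  rw [gauss_withDensity, integral_withDensity_eq_integral_smul
    ((measurable_gaussianPDFReal 0 1).real_toNNReal) _, gauss_smul_eq, integral_const_mul,
    integral_gaussian (1/2 - s)]
  rw [← Real.sqrt_inv, ← Real.sqrt_mul (by positivity), ← Real.sqrt_inv]
  congr 1
  have hπ := Real.pi_pos
  rw [div_eq_mul_inv, ← mul_assoc]
  rw [show (2*π)⁻¹ * π = 2⁻¹ by field_simp, ← mul_inv, eq_comm, inv_eq_iff_eq_inv, inv_inv]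
  ring

lemma gauss_sq_integrable {s : ℝ} (hs : s < 1/2) :
    Integrable (fun x => rexp (s * x^2)) (gaussianReal 0 1) := by
  rw [gauss_withDensity, integrable_withDensity_iff_integrable_smul
    ((measurable_gaussianPDFReal 0 1).real_toNNReal)]
  rw [gauss_smul_eq]
  exact (integrable_exp_neg_mul_sq (by linarith)).const_mul _


lemma summable_exp_rpow {b γ : ℝ} (hb : 0 < b) (hγ : 0 < γ) :
    Summable (fun n : ℕ => rexp (-b * (n:ℝ)^γ)) := by
  have h0 : Tendsto (fun x : ℝ => x^(2:ℝ) * rexp (-b * x^γ)) atTop (nhds 0) := by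
    have h1 := (tendsto_rpow_mul_exp_neg_mul_atTop_nhds_zero (2/γ) b hb).comp
      (tendsto_rpow_atTop hγ)
    apply h1.congr'
    filter_upwards [eventually_ge_atTop (1:ℝ)] with x hx
    have hx0 : (0:ℝ) ≤ x := le_trans zero_le_one hx
    simp only [Function.comp_apply]
    rw [← Real.rpow_mul hx0, mul_div_cancel₀ _ hγ.ne']
  have hlittle : (fun x : ℝ => rexp (-b * x^γ)) =o[atTop] (fun x : ℝ => x^(-2:ℝ)) := by
    apply Asymptotics.isLittleO_of_tendsto'
    · filter_upwards [eventually_ge_atTop (1:ℝ)] with x hx h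
      exact absurd h (by positivity)
    · apply h0.congr'
      filter_upwards [eventually_ge_atTop (1:ℝ)] with x hx
      have hx0 : (0:ℝ) ≤ x := le_trans zero_le_one hx
      rw [Real.rpow_neg hx0, div_inv_eq_mul, mul_comm]
  have hbig : (fun n : ℕ => rexp (-b * (n:ℝ)^γ)) =O[atTop] (fun n : ℕ => (n:ℝ)^(-2:ℝ)) :=
    (hlittle.isBigO).comp_tendsto tendsto_natCast_atTop_atTop
  exact summable_of_isBigO_nat (Real.summable_nat_rpow.mpr (by norm_num)) hbig

section
variable {Ω : Type*} [MeasureSpace Ω] [IsProbabilityMeasure (ℙ : Measure Ω)]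
    {W : ℕ → Ω → ℝ} (hWmeas : ∀ i, Measurable (W i))
    (hWgauss : ∀ i, Measure.map (W i) ℙ = gaussianReal 0 1)

include hWmeas hWgauss in
lemma exp_int {t b : ℝ} (hb : 0 ≤ b) (htb : t * b < 1/2) (i : ℕ) :
    Integrable (fun ω => rexp (t * (b * (W i ω)^2))) ℙ := by
  have h : Integrable (fun x => rexp ((t*b) * x^2)) (Measure.map (W i) ℙ) := by
    rw [hWgauss i]; exact gauss_sq_integrable htb
  have := (integrable_map_measure h.aestronglyMeasurable (hWmeas i).aemeasurable).mp h
  simpa [Function.comp_def, mul_assoc] using this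

include hWmeas hWgauss in
lemma mgf_eq {t b : ℝ} (hb : 0 ≤ b) (htb : t * b < 1/2) (i : ℕ) :
    mgf (fun ω => b * (W i ω)^2) ℙ t = (Real.sqrt (1 - 2*(t*b)))⁻¹ := by
  have h : Integrable (fun x => rexp ((t*b) * x^2)) (Measure.map (W i) ℙ) := by
    rw [hWgauss i]; exact gauss_sq_integrable htb
  rw [mgf, ← gauss_sq_integral htb, ← hWgauss i,
    integral_map (hWmeas i).aemeasurable h.aestronglyMeasurable]
  congr 1; funext ω; ring_nf

end

section
variable {Ω : Type*} [MeasureSpace Ω] [IsProbabilityMeasure (ℙ : Measure Ω)]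
    {W : ℕ → Ω → ℝ} (hWmeas : ∀ i, Measurable (W i))
    (hWindep : iIndepFun W ℙ)
    (hWgauss : ∀ i, Measure.map (W i) ℙ = gaussianReal 0 1)

include hWmeas hWindep hWgauss in
lemma mgf_T_le (n : ℕ) (a : ℕ → ℝ) (ha : ∀ i, 0 ≤ a i) {M t : ℝ} (hM : 0 < M)
    (haM : ∀ i ∈ Finset.Icc 1 n, a i ≤ M) (ht : |t| * M ≤ 1/4) :
    mgf (∑ i ∈ Finset.Icc 1 n, fun ω => a i * (W i ω)^2) ℙ t
      ≤ rexp (t * (∑ i ∈ Finset.Icc 1 n, a i) + 4 * t^2 * M * (∑ i ∈ Finset.Icc 1 n, a i)) := by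
  have hXmeas : ∀ i, Measurable (fun ω => a i * (W i ω)^2) :=
    fun i => (measurable_const.mul ((hWmeas i).pow_const 2))
  have hXindep : iIndepFun
      (fun i => fun ω => a i * (W i ω)^2) ℙ := by
    have := hWindep.comp (fun i (x : ℝ) => a i * x^2)
      (fun i => measurable_const.mul (measurable_id.pow_const 2))
    exact this
  have habs : ∀ i ∈ Finset.Icc 1 n, |t * a i| ≤ 1/4 := by
    intro i hi
    rw [abs_mul, abs_of_nonneg (ha i)]
    calc |t| * a i ≤ |t| * M := by
          exact mul_le_mul_of_nonneg_left (haM i hi) (abs_nonneg t)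
      _ ≤ 1/4 := ht
  have hlt : ∀ i ∈ Finset.Icc 1 n, t * a i < 1/2 := by
    intro i hi
    calc t * a i ≤ |t * a i| := le_abs_self _
      _ ≤ 1/4 := habs i hi
      _ < 1/2 := by norm_num
  rw [hXindep.mgf_sum hXmeas]
  calc ∏ i ∈ Finset.Icc 1 n, mgf (fun ω => a i * (W i ω)^2) ℙ t
      ≤ ∏ i ∈ Finset.Icc 1 n, rexp (t * a i + 4 * (t * a i)^2) := by
        refine Finset.prod_le_prod (fun i _ => mgf_nonneg) (fun i hi => ?_)
        rw [mgf_eq hWmeas hWgauss (ha i) (hlt i hi)]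
        exact sqrt_inv_le_exp (habs i hi)
    _ = rexp (∑ i ∈ Finset.Icc 1 n, (t * a i + 4 * (t * a i)^2)) := by
        rw [Real.exp_sum]
    _ ≤ rexp (t * (∑ i ∈ Finset.Icc 1 n, a i) + 4 * t^2 * M * (∑ i ∈ Finset.Icc 1 n, a i)) := by
        apply Real.exp_le_exp.mpr
        rw [Finset.sum_add_distrib, Finset.mul_sum, Finset.mul_sum]
        refine add_le_add (le_of_eq rfl) (Finset.sum_le_sum (fun i hi => ?_))
        have h1 : (t * a i)^2 = t^2 * (a i * a i) := by ring
        have h2 : a i * a i ≤ M * a i := mul_le_mul_of_nonneg_right (haM i hi) (ha i)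
        nlinarith [sq_nonneg t, ha i]

end

section
variable {Ω : Type*} [MeasureSpace Ω] [IsProbabilityMeasure (ℙ : Measure Ω)]
    {W : ℕ → Ω → ℝ} (hWmeas : ∀ i, Measurable (W i))
    (hWindep : iIndepFun W ℙ)
    (hWgauss : ∀ i, Measure.map (W i) ℙ = gaussianReal 0 1)

include hWmeas hWindep hWgauss in
lemma tail_prob (n : ℕ) (a : ℕ → ℝ) (ha : ∀ i, 0 ≤ a i) {M ε : ℝ} (hM : 0 < M)
    (haM : ∀ i ∈ Finset.Icc 1 n, a i ≤ M) (hε : 0 < ε) (hε1 : ε ≤ 1) :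
    (ℙ {ω | ε * (∑ i ∈ Finset.Icc 1 n, a i)
        ≤ |(∑ i ∈ Finset.Icc 1 n, a i * (W i ω)^2) - ∑ i ∈ Finset.Icc 1 n, a i|}).toReal
      ≤ 2 * rexp (-(ε^2/(16*M)) * (∑ i ∈ Finset.Icc 1 n, a i)) := by
  set Sn := ∑ i ∈ Finset.Icc 1 n, a i with hSn
  have hSn0 : 0 ≤ Sn := Finset.sum_nonneg (fun i _ => ha i)
  set t := ε/(8*M) with htdef
  have ht0 : 0 ≤ t := by positivity
  have h8 : t * M = ε / 8 := by rw [htdef]; field_simp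
  have htM : |t| * M ≤ 1/4 := by rw [abs_of_nonneg ht0, h8]; linarith
  have hXmeas : ∀ i, Measurable (fun ω => a i * (W i ω)^2) :=
    fun i => (measurable_const.mul ((hWmeas i).pow_const 2))
  have hXindep : iIndepFun
      (fun i => fun ω => a i * (W i ω)^2) ℙ :=
    hWindep.comp (fun i (x : ℝ) => a i * x^2)
      (fun i => measurable_const.mul (measurable_id.pow_const 2))
  have hlt : ∀ (t' : ℝ), |t'| * M ≤ 1/4 → ∀ i ∈ Finset.Icc 1 n, t' * a i < 1/2 := by
    intro t' ht' i hi
    calc t' * a i ≤ |t' * a i| := le_abs_self _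
      _ = |t'| * a i := by rw [abs_mul, abs_of_nonneg (ha i)]
      _ ≤ |t'| * M := mul_le_mul_of_nonneg_left (haM i hi) (abs_nonneg _)
      _ ≤ 1/4 := ht'
      _ < 1/2 := by norm_num
  have hint : ∀ (t' : ℝ), |t'| * M ≤ 1/4 →
      Integrable (fun ω => rexp (t' * (∑ i ∈ Finset.Icc 1 n, fun ω' => a i * (W i ω')^2) ω)) ℙ :=
    fun t' ht' => hXindep.integrable_exp_mul_sum hXmeas
      (fun i hi => exp_int hWmeas hWgauss (ha i) (hlt t' ht' i hi) i)
  have htM' : |(-t)| * M ≤ 1/4 := by rwa [abs_neg]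
  have hmgf_t := mgf_T_le hWmeas hWindep hWgauss n a ha hM haM htM
  have hmgf_nt := mgf_T_le hWmeas hWindep hWgauss n a ha hM haM htM'
  have hupper := measure_ge_le_exp_mul_mgf (μ := ℙ)
    (X := ∑ i ∈ Finset.Icc 1 n, fun ω => a i * (W i ω)^2) ((1+ε) * Sn) ht0 (hint t htM)
  have hlower := measure_le_le_exp_mul_mgf (μ := ℙ)
    (X := ∑ i ∈ Finset.Icc 1 n, fun ω => a i * (W i ω)^2) ((1-ε) * Sn)
    (neg_nonpos.mpr ht0) (hint (-t) htM')
  have hexp : -t * ((1+ε) * Sn) + (t * Sn + 4 * t^2 * M * Sn) = -(ε^2/(16*M)) * Sn := by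
    rw [htdef]; field_simp; ring
  have hexp' : -(-t) * ((1-ε) * Sn) + ((-t) * Sn + 4 * (-t)^2 * M * Sn) = -(ε^2/(16*M)) * Sn := by
    rw [htdef]; field_simp; ring
  have hU : (ℙ {ω | (1+ε) * Sn ≤ (∑ i ∈ Finset.Icc 1 n, fun ω' => a i * (W i ω')^2) ω}).toReal
      ≤ rexp (-(ε^2/(16*M)) * Sn) := by
    calc _ ≤ rexp (-t * ((1+ε)*Sn)) * mgf _ ℙ t := hupper
      _ ≤ rexp (-t * ((1+ε)*Sn)) * rexp (t * Sn + 4 * t^2 * M * Sn) :=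
          mul_le_mul_of_nonneg_left hmgf_t (exp_nonneg _)
      _ = rexp (-(ε^2/(16*M)) * Sn) := by rw [← Real.exp_add, hexp]
  have hL : (ℙ {ω | (∑ i ∈ Finset.Icc 1 n, fun ω' => a i * (W i ω')^2) ω ≤ (1-ε) * Sn}).toReal
      ≤ rexp (-(ε^2/(16*M)) * Sn) := by
    calc _ ≤ rexp (-(-t) * ((1-ε)*Sn)) * mgf _ ℙ (-t) := hlower
      _ ≤ rexp (-(-t) * ((1-ε)*Sn)) * rexp ((-t) * Sn + 4 * (-t)^2 * M * Sn) :=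
          mul_le_mul_of_nonneg_left hmgf_nt (exp_nonneg _)
      _ = rexp (-(ε^2/(16*M)) * Sn) := by rw [← Real.exp_add, hexp']
  have hsub : {ω | ε * Sn ≤ |(∑ i ∈ Finset.Icc 1 n, a i * (W i ω)^2) - Sn|}
      ⊆ {ω | (1+ε) * Sn ≤ (∑ i ∈ Finset.Icc 1 n, fun ω' => a i * (W i ω')^2) ω}
        ∪ {ω | (∑ i ∈ Finset.Icc 1 n, fun ω' => a i * (W i ω')^2) ω ≤ (1-ε) * Sn} := by
    intro ω hω
    simp only [Set.mem_setOf_eq] at hω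
    rcases le_abs.mp hω with h | h
    · left
      simp only [Set.mem_setOf_eq, Finset.sum_apply]
      linarith
    · right
      simp only [Set.mem_setOf_eq, Finset.sum_apply]
      linarith
  calc (ℙ {ω | ε * Sn ≤ |(∑ i ∈ Finset.Icc 1 n, a i * (W i ω)^2) - Sn|}).toReal
      ≤ (ℙ ({ω | (1+ε) * Sn ≤ (∑ i ∈ Finset.Icc 1 n, fun ω' => a i * (W i ω')^2) ω}
          ∪ {ω | (∑ i ∈ Finset.Icc 1 n, fun ω' => a i * (W i ω')^2) ω ≤ (1-ε) * Sn})).toReal := by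
        apply ENNReal.toReal_mono (measure_ne_top _ _)
        exact measure_mono hsub
    _ ≤ ((ℙ {ω | (1+ε) * Sn ≤ (∑ i ∈ Finset.Icc 1 n, fun ω' => a i * (W i ω')^2) ω})
          + ℙ {ω | (∑ i ∈ Finset.Icc 1 n, fun ω' => a i * (W i ω')^2) ω ≤ (1-ε) * Sn}).toReal := by
        apply ENNReal.toReal_mono
        · exact ENNReal.add_ne_top.mpr ⟨measure_ne_top _ _, measure_ne_top _ _⟩
        · exact measure_union_le _ _
    _ ≤ _ := by
        rw [ENNReal.toReal_add (measure_ne_top _ _) (measure_ne_top _ _)]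
        linarith

end

end Aux

section Main
open Real

/-- strong law for weighted sums of squares of i.i.d. standard
normals: if the nonnegative weights are uniformly bounded and the row sums
`Sₙ` tend to infinity at least polynomially, then `(1/Sₙ) ∑ cₙᵢ Wᵢ² → 1` a.s. -/
theorem stmt5
    {Ω : Type*} [MeasureSpace Ω] [IsProbabilityMeasure (ℙ : Measure Ω)]
    (W : ℕ → Ω → ℝ)
    (hWmeas : ∀ i, Measurable (W i))
    (hWindep : iIndepFun W ℙ)
    (hWgauss : ∀ i, Measure.map (W i) ℙ = gaussianReal 0 1)
    (c : ℕ → ℕ → ℝ) (hc : ∀ (n i : ℕ), 0 ≤ c n i)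
    (M : ℝ) (hM : ∀ (n i : ℕ), 1 ≤ i → i ≤ n → c n i ≤ M)
    (S : ℕ → ℝ) (hS : ∀ n, S n = ∑ i ∈ Finset.Icc 1 n, c n i)
    (hStop : Tendsto S atTop atTop)
    (δ γ : ℝ) (hδ : 0 < δ) (hγ : 0 < γ)
    (hSlb : ∀ n : ℕ, 1 ≤ n → δ * (n : ℝ) ^ γ ≤ S n) :
    ∀ᵐ ω ∂(ℙ : Measure Ω),
      Tendsto (fun n => (1 / S n) * ∑ i ∈ Finset.Icc 1 n, c n i * (W i ω) ^ 2)
        atTop (nhds 1) := by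
  -- M is positive
  have hM0 : 0 < M := by
    obtain ⟨n₀, hn₀1, hn₀S⟩ : ∃ n₀, 1 ≤ n₀ ∧ 0 < S n₀ := by
      obtain ⟨N, hN⟩ := (eventually_atTop.mp ((hStop.eventually_gt_atTop 0).and
        (eventually_ge_atTop 1)))
      exact ⟨max N 1, (hN (max N 1) (le_max_left _ _)).2, (hN (max N 1) (le_max_left _ _)).1⟩
    by_contra h
    push_neg at h
    have : S n₀ ≤ 0 := by
      rw [hS n₀]
      apply Finset.sum_nonpos
      intro i hi
      rw [Finset.mem_Icc] at hi
      exact le_trans (hM n₀ i hi.1 hi.2) h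
    linarith
  -- the bad sets
  set T : ℕ → Ω → ℝ := fun n ω => ∑ i ∈ Finset.Icc 1 n, c n i * (W i ω)^2 with hT
  set A : ℕ → ℕ → Set Ω :=
    fun k n => {ω | (1/((k:ℝ)+1)) * S n ≤ |T n ω - S n|} with hA
  have hεpos : ∀ k : ℕ, (0:ℝ) < 1/((k:ℝ)+1) := by
    intro k; positivity
  have hεle : ∀ k : ℕ, (1:ℝ)/((k:ℝ)+1) ≤ 1 := by
    intro k
    rw [div_le_one (by positivity)]
    simp
  -- summability of measures of bad sets
  have hBC : ∀ k : ℕ, ∀ᵐ ω ∂(ℙ : Measure Ω), ∀ᶠ n in atTop, ω ∉ A k n := by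
    intro k
    set ε : ℝ := 1/((k:ℝ)+1)
    set b : ℝ := ε^2 * δ / (16*M) with hb
    have hb0 : 0 < b := by positivity
    apply ae_eventually_notMem
    have key : ∀ n : ℕ, 1 ≤ n →
        ℙ (A k n) ≤ ENNReal.ofReal (2 * rexp (-b * (n:ℝ)^γ)) := by
      intro n hn
      have h1 : (ℙ (A k n)).toReal ≤ 2 * rexp (-(ε^2/(16*M)) * S n) := by
        have := tail_prob hWmeas hWindep hWgauss n (c n) (hc n) hM0
          (fun i hi => hM n i (Finset.mem_Icc.mp hi).1 (Finset.mem_Icc.mp hi).2)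
          (hεpos k) (hεle k)
        rw [hA, hT]
        simp only [← hS n] at this ⊢
        exact this
      have h2 : 2 * rexp (-(ε^2/(16*M)) * S n) ≤ 2 * rexp (-b * (n:ℝ)^γ) := by
        have h3 : -(ε^2/(16*M)) * S n ≤ -b * (n:ℝ)^γ := by
          have h4 := hSlb n hn
          have h5 : 0 < ε^2/(16*M) := by positivity
          rw [hb]
          calc -(ε^2/(16*M)) * S n ≤ -(ε^2/(16*M)) * (δ * (n:ℝ)^γ) := by
                rw [neg_mul, neg_mul, neg_le_neg_iff]
                exact mul_le_mul_of_nonneg_left h4 h5.le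
            _ = -(ε^2 * δ / (16*M)) * (n:ℝ)^γ := by ring
        exact mul_le_mul_of_nonneg_left (Real.exp_le_exp.mpr h3) (by norm_num)
      rw [← ENNReal.ofReal_toReal (measure_ne_top ℙ (A k n))]
      exact ENNReal.ofReal_le_ofReal (le_trans h1 h2)
    have hsummable : Summable (fun n : ℕ => 2 * rexp (-b * (n:ℝ)^γ)) :=
      (summable_exp_rpow hb0 hγ).mul_left 2
    apply ne_top_of_le_ne_top (b := (∑' n : ℕ, ENNReal.ofReal (2 * rexp (-b * (n:ℝ)^γ)))
            + ∑' n : ℕ, (if n = 0 then (1:ℝ≥0∞) else 0))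
    · apply ENNReal.add_ne_top.mpr
      constructor
      · rw [← ENNReal.ofReal_tsum_of_nonneg (fun n => by positivity) hsummable]
        exact ENNReal.ofReal_ne_top
      · simp only [tsum_ite_eq]
        exact ENNReal.one_ne_top
    calc ∑' n, ℙ (A k n)
        ≤ ∑' n : ℕ, (ENNReal.ofReal (2 * rexp (-b * (n:ℝ)^γ))
            + (if n = 0 then 1 else 0)) := by
          apply ENNReal.tsum_le_tsum
          intro n
          rcases Nat.eq_zero_or_pos n with h | h
          · subst h
            simp only [if_pos rfl]
            exact le_add_left prob_le_one
          · rw [if_neg (Nat.one_le_iff_ne_zero.mp h), add_zero]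
            exact key n h
      _ = (∑' n : ℕ, ENNReal.ofReal (2 * rexp (-b * (n:ℝ)^γ)))
            + ∑' n : ℕ, (if n = 0 then (1:ℝ≥0∞) else 0) := ENNReal.tsum_add
  rw [← ae_all_iff] at hBC
  filter_upwards [hBC] with ω hω
  rw [Metric.tendsto_atTop]
  intro ε hε
  obtain ⟨k, hk⟩ := exists_nat_one_div_lt hε
  obtain ⟨N₁, hN₁⟩ := eventually_atTop.mp (hω k)
  obtain ⟨N₂, hN₂⟩ := eventually_atTop.mp (hStop.eventually_gt_atTop 0)
  refine ⟨max N₁ N₂, fun n hn => ?_⟩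
  have h1 := hN₁ n (le_trans (le_max_left _ _) hn)
  have h2 := hN₂ n (le_trans (le_max_right _ _) hn)
  rw [hA] at h1
  simp only [Set.mem_setOf_eq, not_le] at h1
  rw [Real.dist_eq]
  have h3 : (1 / S n) * T n ω - 1 = (T n ω - S n) / S n := by
    field_simp
  rw [hT] at h3
  rw [h3, abs_div, abs_of_pos h2, div_lt_iff₀ h2]
  calc |T n ω - S n| < (1/((k:ℝ)+1)) * S n := h1
    _ ≤ ε * S n := by
        apply mul_le_mul_of_nonneg_right _ h2.le
        exact le_of_lt hk

end Main
end

section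
/- Let $\sigma_1^2, \sigma_2^2, \phi_1, \phi_2, \nu, d > 0$ with $f_i(u) = \sigma_i^2\phi_i^{2\nu}/(\phi_i^2 + u^2)^{\nu + d/2}$. If $\sigma_1^2\phi_1^{2\nu} = \sigma_2^2\phi_2^{2\nu}$, then there exists a constant $C > 0$ such that $|f_1(u)/f_2(u) - 1| \le C/(1 + u^2)$ for all $u \ge 0$; consequently $\int_0^\infty u^{d-1} \left(\frac{f_1(u) - f_2(u)}{f_2(u)}\right)^2 du < \infty$ whenever $d \le 3$. -/
open Real MeasureTheory

set_option maxHeartbeats 1000000 in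
/-- quantitative tail estimate for the ratio of two Matérn spectral
densities with equal microergodic parameter, and the resulting integrability
criterion in dimension `d ≤ 3`. -/
theorem stmt13
    (σ1sq σ2sq φ1 φ2 ν d : ℝ)
    (hσ1 : 0 < σ1sq) (hσ2 : 0 < σ2sq) (hφ1 : 0 < φ1) (hφ2 : 0 < φ2)
    (hν : 0 < ν) (hd : 0 < d)
    (hmicro : σ1sq * φ1 ^ (2 * ν) = σ2sq * φ2 ^ (2 * ν)) :
    (∃ C : ℝ, 0 < C ∧ ∀ u : ℝ, 0 ≤ u →
      |(σ1sq * φ1 ^ (2 * ν) / (φ1 ^ 2 + u ^ 2) ^ (ν + d / 2)) /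
        (σ2sq * φ2 ^ (2 * ν) / (φ2 ^ 2 + u ^ 2) ^ (ν + d / 2)) - 1|
        ≤ C / (1 + u ^ 2)) ∧
    (d ≤ 3 → IntegrableOn (fun u : ℝ =>
        u ^ (d - 1) *
          (((σ1sq * φ1 ^ (2 * ν) / (φ1 ^ 2 + u ^ 2) ^ (ν + d / 2)) -
            (σ2sq * φ2 ^ (2 * ν) / (φ2 ^ 2 + u ^ 2) ^ (ν + d / 2))) /
           (σ2sq * φ2 ^ (2 * ν) / (φ2 ^ 2 + u ^ 2) ^ (ν + d / 2))) ^ 2)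
        (Set.Ioi (0 : ℝ)) volume) := by
  set p : ℝ := ν + d / 2 with hp_def
  have hp : 0 < p := by positivity
  set A : ℝ := σ1sq * φ1 ^ (2 * ν) with hA_def
  have hA : 0 < A := by positivity
  set a : ℝ := min (φ2 ^ 2 / φ1 ^ 2) 1 with ha_def
  set b : ℝ := max (φ2 ^ 2 / φ1 ^ 2) 1 with hb_def
  have ha : 0 < a := lt_min (by positivity) one_pos
  have hab : a ≤ b := min_le_max
  have ha1 : a ≤ 1 := min_le_right _ _
  have h1b : 1 ≤ b := le_max_right _ _
  -- Lipschitz constant for x ↦ x^p on [a,b]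
  set L : ℝ := p * max (a ^ (p - 1)) (b ^ (p - 1)) with hL_def
  have hL0 : 0 ≤ L := by
    apply mul_nonneg hp.le
    exact le_trans (Real.rpow_nonneg ha.le _) (le_max_left _ _)
  have hLip : ∀ x ∈ Set.Icc a b, |x ^ p - 1| ≤ L * |x - 1| := by
    intro x hx
    have h1mem : (1 : ℝ) ∈ Set.Icc a b := ⟨ha1, h1b⟩
    have := (convex_Icc a b).norm_image_sub_le_of_norm_hasDerivWithin_le
      (f := fun y : ℝ => y ^ p) (f' := fun y : ℝ => p * y ^ (p - 1))
      (fun y hy => (Real.hasDerivAt_rpow_const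
        (Or.inl (ne_of_gt (lt_of_lt_of_le ha hy.1)))).hasDerivWithinAt)
      (fun y hy => by
        have hy0 : 0 < y := lt_of_lt_of_le ha hy.1
        rw [Real.norm_eq_abs, abs_mul, abs_of_pos hp, abs_of_pos (Real.rpow_pos_of_pos hy0 _)]
        rcases le_or_gt 0 (p - 1) with hp1 | hp1
        · exact mul_le_mul_of_nonneg_left
            (le_trans (Real.rpow_le_rpow hy0.le hy.2 hp1)
              (le_max_right (a ^ (p - 1)) (b ^ (p - 1)))) hp.le
        · exact mul_le_mul_of_nonneg_left
            (le_trans (Real.rpow_le_rpow_of_nonpos ha hy.1 hp1.le)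
              (le_max_left (a ^ (p - 1)) (b ^ (p - 1)))) hp.le)
      h1mem hx
    simpa [Real.one_rpow, Real.norm_eq_abs] using this
  -- the key pointwise bound
  set C : ℝ := L * |φ2 ^ 2 - φ1 ^ 2| / min (φ1 ^ 2) 1 + 1 with hC_def
  have hc1 : 0 < min (φ1 ^ 2) 1 := lt_min (by positivity) one_pos
  have hC : 0 < C := by
    have : 0 ≤ L * |φ2 ^ 2 - φ1 ^ 2| / min (φ1 ^ 2) 1 :=
      div_nonneg (mul_nonneg hL0 (abs_nonneg _)) hc1.le
    rw [hC_def]; linarith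
  have key : ∀ u : ℝ, 0 ≤ u →
      |A / (φ1 ^ 2 + u ^ 2) ^ p / (σ2sq * φ2 ^ (2 * ν) / (φ2 ^ 2 + u ^ 2) ^ p) - 1|
        ≤ C / (1 + u ^ 2) := by
    intro u _
    have hx1 : (0 : ℝ) < φ1 ^ 2 + u ^ 2 := by positivity
    have hx2 : (0 : ℝ) < φ2 ^ 2 + u ^ 2 := by positivity
    have hx1p : (0 : ℝ) < (φ1 ^ 2 + u ^ 2) ^ p := Real.rpow_pos_of_pos hx1 _
    have hx2p : (0 : ℝ) < (φ2 ^ 2 + u ^ 2) ^ p := Real.rpow_pos_of_pos hx2 _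
    set r : ℝ := (φ2 ^ 2 + u ^ 2) / (φ1 ^ 2 + u ^ 2) with hr_def
    have hratio : A / (φ1 ^ 2 + u ^ 2) ^ p / (σ2sq * φ2 ^ (2 * ν) / (φ2 ^ 2 + u ^ 2) ^ p)
        = r ^ p := by
      rw [← hmicro, Real.div_rpow hx2.le hx1.le, div_div_div_comm,
        div_self hA.ne', one_div_div]
    have hrmem : r ∈ Set.Icc a b := by
      constructor
      · rcases le_total (φ2 ^ 2) (φ1 ^ 2) with h | h
        · refine le_trans (min_le_left _ _) ?_
          rw [div_le_div_iff₀ (by positivity) hx1]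
          nlinarith [sq_nonneg u]
        · refine le_trans (min_le_right _ _) ?_
          rw [le_div_iff₀ hx1]
          nlinarith
      · rcases le_total (φ2 ^ 2) (φ1 ^ 2) with h | h
        · refine le_trans ?_ (le_max_right _ _)
          rw [div_le_one hx1]
          linarith
        · refine le_trans ?_ (le_max_left _ _)
          rw [div_le_div_iff₀ hx1 (by positivity)]
          nlinarith [sq_nonneg u]
    have hr1 : |r - 1| = |φ2 ^ 2 - φ1 ^ 2| / (φ1 ^ 2 + u ^ 2) := by
      rw [hr_def, div_sub_one hx1.ne', abs_div, abs_of_pos hx1]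
      ring_nf
    have hdenom : min (φ1 ^ 2) 1 * (1 + u ^ 2) ≤ φ1 ^ 2 + u ^ 2 := by
      have h1 : min (φ1 ^ 2) 1 ≤ φ1 ^ 2 := min_le_left _ _
      have h2 : min (φ1 ^ 2) 1 * u ^ 2 ≤ 1 * u ^ 2 :=
        mul_le_mul_of_nonneg_right (min_le_right _ _) (sq_nonneg u)
      rw [one_mul] at h2
      calc min (φ1 ^ 2) 1 * (1 + u ^ 2)
          = min (φ1 ^ 2) 1 + min (φ1 ^ 2) 1 * u ^ 2 := by ring
        _ ≤ φ1 ^ 2 + u ^ 2 := add_le_add h1 h2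
    have hB : |r - 1| ≤ |φ2 ^ 2 - φ1 ^ 2| / (min (φ1 ^ 2) 1 * (1 + u ^ 2)) := by
      rw [hr1]
      exact div_le_div_of_nonneg_left (abs_nonneg _)
        (by positivity) hdenom
    calc |A / (φ1 ^ 2 + u ^ 2) ^ p / (σ2sq * φ2 ^ (2 * ν) / (φ2 ^ 2 + u ^ 2) ^ p) - 1|
        = |r ^ p - 1| := by rw [hratio]
      _ ≤ L * |r - 1| := hLip r hrmem
      _ ≤ L * (|φ2 ^ 2 - φ1 ^ 2| / (min (φ1 ^ 2) 1 * (1 + u ^ 2))) :=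
          mul_le_mul_of_nonneg_left hB hL0
      _ = L * |φ2 ^ 2 - φ1 ^ 2| / min (φ1 ^ 2) 1 / (1 + u ^ 2) := by
          field_simp
      _ ≤ C / (1 + u ^ 2) := by
          apply div_le_div_of_nonneg_right ?_ (by positivity)
          · rw [hC_def]; linarith
  refine ⟨⟨C, hC, key⟩, ?_⟩
  -- Part 2 : integrability
  intro hd3
  set F : ℝ → ℝ := fun u : ℝ =>
        u ^ (d - 1) *
          (((σ1sq * φ1 ^ (2 * ν) / (φ1 ^ 2 + u ^ 2) ^ (ν + d / 2)) -
            (σ2sq * φ2 ^ (2 * ν) / (φ2 ^ 2 + u ^ 2) ^ (ν + d / 2))) /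
           (σ2sq * φ2 ^ (2 * ν) / (φ2 ^ 2 + u ^ 2) ^ (ν + d / 2))) ^ 2 with hF_def
  have hf2pos : ∀ u : ℝ, 0 < σ2sq * φ2 ^ (2 * ν) / (φ2 ^ 2 + u ^ 2) ^ p := fun u => by
    have : (0:ℝ) < (φ2 ^ 2 + u ^ 2) ^ p := Real.rpow_pos_of_pos (by positivity) _
    positivity
  have hFeq : ∀ u : ℝ, F u = u ^ (d - 1) *
      (A / (φ1 ^ 2 + u ^ 2) ^ p / (σ2sq * φ2 ^ (2 * ν) / (φ2 ^ 2 + u ^ 2) ^ p) - 1) ^ 2 := by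
    intro u
    simp only [hF_def]
    congr 1
    rw [sub_div, div_self (hf2pos u).ne']
  have hFbound : ∀ u : ℝ, 0 < u → ‖F u‖ ≤ u ^ (d - 1) * (C / (1 + u ^ 2)) ^ 2 := by
    intro u hu
    rw [hFeq u, Real.norm_eq_abs, abs_mul, abs_of_nonneg (Real.rpow_nonneg hu.le _), abs_pow]
    apply mul_le_mul_of_nonneg_left _ (Real.rpow_nonneg hu.le _)
    exact pow_le_pow_left₀ (abs_nonneg _) (key u hu.le) 2
  -- continuity / measurability
  have hcont : ContinuousOn F (Set.Ioi (0:ℝ)) := by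
    intro u hu
    have hu0 : (0:ℝ) < u := hu
    apply ContinuousAt.continuousWithinAt
    have hc1 : ContinuousAt (fun u : ℝ => (φ1 ^ 2 + u ^ 2) ^ (ν + d / 2)) u :=
      ContinuousAt.rpow_const (by fun_prop) (Or.inl (by positivity))
    have hc2 : ContinuousAt (fun u : ℝ => (φ2 ^ 2 + u ^ 2) ^ (ν + d / 2)) u :=
      ContinuousAt.rpow_const (by fun_prop) (Or.inl (by positivity))
    have hne1 : ((φ1 ^ 2 + u ^ 2) ^ (ν + d / 2) : ℝ) ≠ 0 :=
      (Real.rpow_pos_of_pos (by positivity) _).ne'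
    have hne2 : ((φ2 ^ 2 + u ^ 2) ^ (ν + d / 2) : ℝ) ≠ 0 :=
      (Real.rpow_pos_of_pos (by positivity) _).ne'
    have hf1c : ContinuousAt
        (fun u : ℝ => σ1sq * φ1 ^ (2 * ν) / (φ1 ^ 2 + u ^ 2) ^ (ν + d / 2)) u :=
      continuousAt_const.div hc1 hne1
    have hf2c : ContinuousAt
        (fun u : ℝ => σ2sq * φ2 ^ (2 * ν) / (φ2 ^ 2 + u ^ 2) ^ (ν + d / 2)) u :=
      continuousAt_const.div hc2 hne2
    have hpow : ContinuousAt (fun u : ℝ => u ^ (d - 1)) u :=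
      continuousAt_id.rpow_const (Or.inl hu0.ne')
    exact hpow.mul (((hf1c.sub hf2c).div hf2c (hf2pos u).ne').pow 2)
  have hIoc : Set.Ioc (0:ℝ) 1 ⊆ Set.Ioi (0:ℝ) := Set.Ioc_subset_Ioi_self
  have hIoi1 : Set.Ioi (1:ℝ) ⊆ Set.Ioi (0:ℝ) := Set.Ioi_subset_Ioi zero_le_one
  have h01 : IntegrableOn F (Set.Ioc (0:ℝ) 1) volume := by
    apply Integrable.mono' (g := fun u : ℝ => C ^ 2 * u ^ (d - 1))
    · have hg : IntegrableOn (fun u : ℝ => u ^ (d - 1)) (Set.Ioc (0:ℝ) 1) volume := by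
        have h := intervalIntegral.intervalIntegrable_rpow'
          (a := 0) (b := 1) (r := d - 1) (by linarith)
        rwa [intervalIntegrable_iff_integrableOn_Ioc_of_le zero_le_one] at h
      exact hg.const_mul _
    · exact ((hcont.mono hIoc).aestronglyMeasurable measurableSet_Ioc)
    · filter_upwards [ae_restrict_mem measurableSet_Ioc] with u hu
      have hu0 : 0 < u := hu.1
      refine le_trans (hFbound u hu0) ?_
      rw [mul_comm (C^2)]
      apply mul_le_mul_of_nonneg_left _ (Real.rpow_nonneg hu0.le _)
      have h1 : C / (1 + u ^ 2) ≤ C := by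
        apply div_le_self hC.le
        nlinarith [sq_nonneg u]
      have h0 : 0 ≤ C / (1 + u ^ 2) := by positivity
      exact pow_le_pow_left₀ h0 h1 2
  have h1inf : IntegrableOn F (Set.Ioi (1:ℝ)) volume := by
    apply Integrable.mono' (g := fun u : ℝ => C ^ 2 * u ^ (-2 : ℝ))
    · exact (integrableOn_Ioi_rpow_of_lt (by norm_num) one_pos).const_mul _
    · exact ((hcont.mono hIoi1).aestronglyMeasurable measurableSet_Ioi)
    · filter_upwards [ae_restrict_mem measurableSet_Ioi] with u hu
      have hu1 : (1:ℝ) < u := hu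
      have hu0 : (0:ℝ) < u := lt_trans one_pos hu1
      refine le_trans (hFbound u hu0) ?_
      have hud : u ^ (d - 1) ≤ u ^ (2:ℝ) :=
        Real.rpow_le_rpow_of_exponent_le hu1.le (by linarith)
      have hden : (u:ℝ) ^ (4:ℝ) ≤ (1 + u ^ 2) ^ 2 := by
        have : u ^ (4:ℝ) = (u ^ 2) ^ 2 := by
          rw [← Real.rpow_natCast (u ^ 2) 2, ← Real.rpow_natCast u 2, ← Real.rpow_mul hu0.le]
          norm_num
        rw [this]
        nlinarith [sq_nonneg u, sq_nonneg (u^2)]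
      have hstep : u ^ (d - 1) * (C / (1 + u ^ 2)) ^ 2
          = C ^ 2 * (u ^ (d - 1) / (1 + u ^ 2) ^ 2) := by
        rw [div_pow]; ring
      rw [hstep]
      apply mul_le_mul_of_nonneg_left _ (sq_nonneg C)
      calc u ^ (d - 1) / (1 + u ^ 2) ^ 2
          ≤ u ^ (2:ℝ) / u ^ (4:ℝ) := by
            apply div_le_div₀ (Real.rpow_nonneg hu0.le _) hud
              (Real.rpow_pos_of_pos hu0 _) hden
        _ = u ^ (-2:ℝ) := by
            rw [← Real.rpow_sub hu0]; norm_num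
  have hsplit : Set.Ioi (0:ℝ) = Set.Ioc (0:ℝ) 1 ∪ Set.Ioi (1:ℝ) :=
    (Set.Ioc_union_Ioi_eq_Ioi zero_le_one).symm
  rw [hsplit]
  exact h01.union h1inf
end

section
/- Let $W_1, W_2, \ldots$ be i.i.d. standard normal random variables and, for each $n$, let $b_{n1}, \ldots, b_{nn}$ be nonnegative reals bounded by a constant $M$, with $\sum_{i=1}^n b_{ni} \ge \delta n^{\gamma}$ for some $\delta, \gamma > 0$ and all large $n$. Then $\frac{\sum_{i=1}^n b_{ni}(W_i^2 - 1)}{\sum_{i=1}^n b_{ni}} \to 0$ almost surely as $n \to \infty$. -/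
open MeasureTheory ProbabilityTheory Filter Finset
open Real

open scoped ENNReal NNReal

set_option maxHeartbeats 1000000

lemma gauss_int (s : ℝ) (hs : s < 1/2) :
    Integrable (fun x => Real.exp (s * (x ^ 2 - 1))) (gaussianReal 0 1) ∧
    ∫ x, Real.exp (s * (x ^ 2 - 1)) ∂(gaussianReal 0 1)
      = Real.exp (-s) * (Real.sqrt (1 - 2*s))⁻¹ := by
  have hpos : (0:ℝ) < 1/2 - s := by linarith
  have hpdf : ∀ x : ℝ, gaussianPDFReal 0 1 x = (Real.sqrt (2 * π))⁻¹ * Real.exp (-(x^2)/2) := by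
    intro x; simp [gaussianPDFReal]
  have key : ∀ x : ℝ, gaussianPDFReal 0 1 x * Real.exp (s * (x ^ 2 - 1))
      = ((Real.sqrt (2 * π))⁻¹ * Real.exp (-s)) * Real.exp (-(1/2 - s) * x^2) := by
    intro x
    rw [hpdf x, mul_assoc, ← Real.exp_add, mul_assoc, ← Real.exp_add]
    congr 2
    ring
  have hmeas : Measurable fun x : ℝ => (gaussianPDFReal 0 1 x).toNNReal :=
    (measurable_gaussianPDFReal 0 1).real_toNNReal
  have hg : gaussianReal 0 1
      = volume.withDensity fun x => ((gaussianPDFReal 0 1 x).toNNReal : ℝ≥0∞) := by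
    rw [gaussianReal_of_var_ne_zero 0 one_ne_zero, gaussianPDF_def]
    rfl
  have hsmul : (fun x : ℝ => (gaussianPDFReal 0 1 x).toNNReal • Real.exp (s * (x ^ 2 - 1)))
      = fun x => ((Real.sqrt (2 * π))⁻¹ * Real.exp (-s)) * Real.exp (-(1/2 - s) * x^2) := by
    funext x
    rw [NNReal.smul_def, smul_eq_mul, Real.coe_toNNReal _ (gaussianPDFReal_nonneg 0 1 x), key x]
  have hInt2 : Integrable (fun x : ℝ => Real.exp (-(1/2 - s) * x^2)) volume :=
    integrable_exp_neg_mul_sq hpos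
  have hInt : Integrable (fun x => Real.exp (s * (x ^ 2 - 1))) (gaussianReal 0 1) := by
    rw [hg]
    have := (integrable_withDensity_iff_integrable_smul (μ := (volume : Measure ℝ)) hmeas
      (g := fun x => Real.exp (s * (x ^ 2 - 1)))).mpr (by rw [hsmul]; exact hInt2.const_mul _)
    exact this
  refine ⟨hInt, ?_⟩
  rw [hg, integral_withDensity_eq_integral_smul hmeas, hsmul, integral_const_mul,
    integral_gaussian]
  have hc : (Real.sqrt (2*π))⁻¹ * Real.sqrt (π/(1/2 - s)) = (Real.sqrt (1 - 2*s))⁻¹ := by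
    rw [← Real.sqrt_inv, ← Real.sqrt_mul (by positivity), ← Real.sqrt_inv]
    congr 1
    have hπ : π ≠ 0 := Real.pi_ne_zero
    have h1 : (1:ℝ)/2 - s ≠ 0 := ne_of_gt hpos
    have h2 : (1:ℝ) - 2*s ≠ 0 := by intro h; apply h1; linarith
    field_simp
  rw [mul_comm ((Real.sqrt (2*π))⁻¹) (Real.exp (-s)), mul_assoc, hc]

lemma mgf_bound (s : ℝ) (hs : |s| ≤ 1/4) :
    Real.exp (-s) * (Real.sqrt (1 - 2*s))⁻¹ ≤ Real.exp (4 * s^2) := by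
  have hs1 : s ≤ 1/4 := (abs_le.mp hs).2
  have hs2 : -(1/4) ≤ s := (abs_le.mp hs).1
  have h1 : 0 < 1 - 2*s := by linarith
  have hy : 0 < 1 + 2*s + 8*s^2 := by nlinarith [sq_nonneg (s + 1/8)]
  have key : Real.exp (-(2*s) - 8*s^2) ≤ 1 - 2*s := by
    have hA : (1:ℝ) + 2*s + 8*s^2 ≤ Real.exp (2*s + 8*s^2) := by
      have := Real.add_one_le_exp (2*s + 8*s^2); linarith
    calc Real.exp (-(2*s) - 8*s^2) = (Real.exp (2*s + 8*s^2))⁻¹ := by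
          rw [← Real.exp_neg]; ring_nf
      _ ≤ (1 + 2*s + 8*s^2)⁻¹ := inv_anti₀ hy hA
      _ ≤ 1 - 2*s := by
          rw [inv_eq_one_div, div_le_iff₀ hy]
          nlinarith [sq_nonneg s]
  have hsq : Real.exp (-s - 4*s^2) ≤ Real.sqrt (1 - 2*s) := by
    have := Real.sqrt_le_sqrt key
    rwa [show -s - 4*s^2 = (-(2*s) - 8*s^2)/2 by ring, Real.exp_half]
  have hinv : (Real.sqrt (1 - 2*s))⁻¹ ≤ Real.exp (s + 4*s^2) := by
    have := inv_anti₀ (Real.exp_pos (-s - 4*s^2)) hsq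
    rwa [← Real.exp_neg, show -(-s - 4*s^2) = s + 4*s^2 by ring] at this
  calc Real.exp (-s) * (Real.sqrt (1 - 2*s))⁻¹
      ≤ Real.exp (-s) * Real.exp (s + 4*s^2) := by
        exact mul_le_mul_of_nonneg_left hinv (Real.exp_pos _).le
    _ = Real.exp (4 * s^2) := by rw [← Real.exp_add]; ring_nf

lemma summable_exp_neg_rpow' {a γ : ℝ} (ha : 0 < a) (hγ : 0 < γ) :
    Summable (fun n : ℕ => Real.exp (-(a * (n:ℝ)^γ))) := by
  have h1 : Summable (fun n : ℕ => 1/(n:ℝ)^(2:ℕ)) :=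
    summable_one_div_nat_pow.mpr (by norm_num)
  refine summable_of_isBigO_nat h1 ?_
  rw [Asymptotics.isBigO_iff]
  refine ⟨1, ?_⟩
  have hlog := (isLittleO_log_rpow_atTop hγ).def (by positivity : (0:ℝ) < a/2)
  have hx := tendsto_natCast_atTop_atTop.eventually hlog
  filter_upwards [hx, eventually_ge_atTop 1] with n hn hn1
  have hn0 : (0:ℝ) < (n:ℝ) := by exact_mod_cast hn1
  have hlogn : Real.log n ≤ a/2 * (n:ℝ)^γ := by
    have h2 : ‖Real.log (n:ℝ)‖ ≤ a/2 * ‖(n:ℝ)^γ‖ := hn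
    rw [Real.norm_eq_abs, Real.norm_eq_abs, abs_of_nonneg (by positivity : (0:ℝ) ≤ (n:ℝ)^γ)] at h2
    exact (le_abs_self _).trans h2
  have key : -(a * (n:ℝ)^γ) ≤ -(2 * Real.log n) := by linarith
  have : Real.exp (-(a * (n:ℝ)^γ)) ≤ 1/(n:ℝ)^(2:ℕ) := by
    calc Real.exp (-(a * (n:ℝ)^γ)) ≤ Real.exp (-(2 * Real.log n)) := Real.exp_le_exp.mpr key
      _ = 1/(n:ℝ)^(2:ℕ) := by
          rw [show -(2 * Real.log (n:ℝ)) = Real.log (n:ℝ) * (-2:ℝ) by ring,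
            ← Real.rpow_def_of_pos hn0, show ((-2:ℝ)) = -((2:ℕ):ℝ) by norm_num,
            Real.rpow_neg hn0.le, Real.rpow_natCast, one_div]
  rw [Real.norm_eq_abs, abs_of_nonneg (Real.exp_pos _).le, one_mul, Real.norm_eq_abs,
    abs_of_nonneg (by positivity)]
  exact this

lemma exp_int_s15 {Ω : Type*} [MeasureSpace Ω] [IsProbabilityMeasure (ℙ : Measure Ω)]
    {Wi : Ω → ℝ} (hm : Measurable Wi) (hg : Measure.map Wi ℙ = gaussianReal 0 1)
    (s : ℝ) (hs : s < 1/2) :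
    Integrable (fun ω => Real.exp (s * ((Wi ω)^2 - 1))) ℙ ∧
    ∫ ω, Real.exp (s * ((Wi ω)^2 - 1)) ∂ℙ = Real.exp (-s) * (Real.sqrt (1 - 2*s))⁻¹ := by
  have hmeas : AEStronglyMeasurable (fun x : ℝ => Real.exp (s * (x^2 - 1)))
      (Measure.map Wi ℙ) :=
    ((measurable_id.pow_const 2).sub_const 1 |>.const_mul s |>.exp).aestronglyMeasurable
  have h1 := (gauss_int s hs).1
  have h2 := (gauss_int s hs).2
  rw [← hg] at h1 h2
  exact ⟨(integrable_map_measure hmeas hm.aemeasurable).mp h1,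
    by rw [← h2, integral_map hm.aemeasurable hmeas]⟩

lemma tail_bound' {Ω : Type*} [MeasureSpace Ω] [IsProbabilityMeasure (ℙ : Measure Ω)]
    (W : ℕ → Ω → ℝ) (hWmeas : ∀ i, Measurable (W i))
    (hWindep : iIndepFun W ℙ)
    (hWgauss : ∀ i, Measure.map (W i) ℙ = gaussianReal 0 1)
    (c : ℕ → ℝ) (hc : ∀ i, 0 ≤ c i) (M : ℝ) (hM : ∀ i, c i ≤ M)
    (t : ℝ) (ht : 0 < t) (htM : t * M ≤ 1/4) (s : Finset ℕ) (ε' : ℝ) :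
    (ℙ {ω | ε' ≤ |∑ i ∈ s, c i * ((W i ω)^2 - 1)|}).toReal
      ≤ 2 * (Real.exp (4*t^2*M*(∑ i ∈ s, c i)) * Real.exp (-(t*ε'))) := by
  set Y : ℕ → Ω → ℝ := fun i ω => c i * ((W i ω)^2 - 1) with hY
  have hYmeas : ∀ i, Measurable (Y i) := fun i =>
    (((hWmeas i).pow_const 2).sub_const 1).const_mul (c i)
  have hYindep : iIndepFun Y ℙ := by
    have := hWindep.comp (g := fun i => fun x : ℝ => c i * (x^2 - 1))
      (fun i => ((measurable_id.pow_const 2).sub_const 1).const_mul (c i))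
    exact this
  have hM0 : 0 ≤ M := le_trans (hc 0) (hM 0)
  -- facts for |u| ≤ t
  have hfacts : ∀ u : ℝ, |u| ≤ t →
      (∀ i, Integrable (fun ω => Real.exp (u * Y i ω)) ℙ) ∧
      (∀ i, mgf (Y i) ℙ u ≤ Real.exp (4*u^2*M*(c i))) := by
    intro u hu
    have habs : ∀ i, |u * c i| ≤ 1/4 := by
      intro i
      rw [abs_mul, abs_of_nonneg (hc i)]
      calc |u| * c i ≤ t * M := mul_le_mul hu (hM i) (hc i) ht.le
        _ ≤ 1/4 := htM
    have hlt : ∀ i, u * c i < 1/2 := fun i => lt_of_le_of_lt (le_of_abs_le (habs i)) (by norm_num)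
    have heq : ∀ i, (fun ω => Real.exp (u * Y i ω))
        = fun ω => Real.exp ((u * c i) * ((W i ω)^2 - 1)) := by
      intro i; funext ω; rw [hY]; ring_nf
    constructor
    · intro i
      rw [heq i]
      exact (exp_int_s15 (hWmeas i) (hWgauss i) _ (hlt i)).1
    · intro i
      have : mgf (Y i) ℙ u = ∫ ω, Real.exp ((u * c i) * ((W i ω)^2 - 1)) ∂ℙ := by
        rw [mgf]; rw [← heq i]
      rw [this, (exp_int_s15 (hWmeas i) (hWgauss i) _ (hlt i)).2]
      calc Real.exp (-(u * c i)) * (Real.sqrt (1 - 2*(u * c i)))⁻¹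
          ≤ Real.exp (4 * (u * c i)^2) := mgf_bound _ (habs i)
        _ ≤ Real.exp (4*u^2*M*(c i)) := by
            apply Real.exp_le_exp.mpr
            have h1 : (c i)^2 ≤ M * c i := by nlinarith [hc i, hM i]
            nlinarith [sq_nonneg u]
  -- mgf of the sum
  have hmgf : ∀ u : ℝ, |u| ≤ t →
      mgf (∑ i ∈ s, Y i) ℙ u ≤ Real.exp (4*t^2*M*(∑ i ∈ s, c i)) := by
    intro u hu
    rw [hYindep.mgf_sum hYmeas]
    calc ∏ i ∈ s, mgf (Y i) ℙ u
        ≤ ∏ i ∈ s, Real.exp (4*u^2*M*(c i)) :=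
          Finset.prod_le_prod (fun i _ => mgf_nonneg) (fun i _ => (hfacts u hu).2 i)
      _ = Real.exp (∑ i ∈ s, 4*u^2*M*(c i)) := by rw [Real.exp_sum]
      _ ≤ Real.exp (4*t^2*M*(∑ i ∈ s, c i)) := by
          apply Real.exp_le_exp.mpr
          rw [← Finset.mul_sum]
          have hu2 : u^2 ≤ t^2 := by nlinarith [abs_nonneg u, sq_abs u, neg_abs_le u, le_abs_self u]
          have hsum0 : 0 ≤ ∑ i ∈ s, c i := Finset.sum_nonneg fun i _ => hc i
          have h4 : (4:ℝ)*u^2 ≤ 4*t^2 := by linarith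
          have := mul_le_mul_of_nonneg_right (mul_le_mul_of_nonneg_right h4 hM0) hsum0
          linarith
  have hintsum : ∀ u : ℝ, |u| ≤ t →
      Integrable (fun ω => Real.exp (u * (∑ i ∈ s, Y i) ω)) ℙ := fun u hu =>
    hYindep.integrable_exp_mul_sum hYmeas (fun i _ => (hfacts u hu).1 i)
  have habs_t : |t| ≤ t := by rw [abs_of_pos ht]
  have habs_nt : |(-t)| ≤ t := by rw [abs_neg, abs_of_pos ht]
  -- Chernoff both tails
  have hup : (ℙ {ω | ε' ≤ (∑ i ∈ s, Y i) ω}).toReal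
      ≤ Real.exp (4*t^2*M*(∑ i ∈ s, c i)) * Real.exp (-(t*ε')) := by
    calc (ℙ {ω | ε' ≤ (∑ i ∈ s, Y i) ω}).toReal
        ≤ Real.exp (-t * ε') * mgf (∑ i ∈ s, Y i) ℙ t :=
          measure_ge_le_exp_mul_mgf ε' ht.le (hintsum t habs_t)
      _ ≤ Real.exp (4*t^2*M*(∑ i ∈ s, c i)) * Real.exp (-(t*ε')) := by
          rw [mul_comm]
          apply mul_le_mul_of_nonneg_right (hmgf t habs_t) (Real.exp_pos _).le
          |>.trans_eq' ?_
          congr 1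
          ring_nf
  have hdown : (ℙ {ω | (∑ i ∈ s, Y i) ω ≤ -ε'}).toReal
      ≤ Real.exp (4*t^2*M*(∑ i ∈ s, c i)) * Real.exp (-(t*ε')) := by
    have := measure_le_le_exp_mul_mgf (X := ∑ i ∈ s, Y i) (μ := ℙ) (-ε')
      (t := -t) (neg_nonpos.mpr ht.le) (hintsum (-t) habs_nt)
    calc (ℙ {ω | (∑ i ∈ s, Y i) ω ≤ -ε'}).toReal
        ≤ Real.exp (-(-t) * (-ε')) * mgf (∑ i ∈ s, Y i) ℙ (-t) := this
      _ ≤ Real.exp (-(t*ε')) * Real.exp (4*t^2*M*(∑ i ∈ s, c i)) := by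
          have h1 : Real.exp (-(-t) * (-ε')) = Real.exp (-(t*ε')) := by ring_nf
          rw [h1]
          exact mul_le_mul_of_nonneg_left (hmgf (-t) habs_nt) (Real.exp_pos _).le
      _ = Real.exp (4*t^2*M*(∑ i ∈ s, c i)) * Real.exp (-(t*ε')) := by ring
  -- combine
  have hsub : {ω | ε' ≤ |∑ i ∈ s, c i * ((W i ω)^2 - 1)|}
      ⊆ {ω | ε' ≤ (∑ i ∈ s, Y i) ω} ∪ {ω | (∑ i ∈ s, Y i) ω ≤ -ε'} := by
    intro ω hω
    have hω' : ε' ≤ |(∑ i ∈ s, Y i) ω| := by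
      simpa [hY, Finset.sum_apply] using hω
    rcases le_abs.mp hω' with h | h
    · exact Or.inl h
    · right
      simp only [Set.mem_setOf_eq]
      linarith
  have hfin1 : ℙ {ω | ε' ≤ (∑ i ∈ s, Y i) ω} ≠ ⊤ := measure_ne_top _ _
  have hfin2 : ℙ {ω | (∑ i ∈ s, Y i) ω ≤ -ε'} ≠ ⊤ := measure_ne_top _ _
  calc (ℙ {ω | ε' ≤ |∑ i ∈ s, c i * ((W i ω)^2 - 1)|}).toReal
      ≤ ((ℙ {ω | ε' ≤ (∑ i ∈ s, Y i) ω} + ℙ {ω | (∑ i ∈ s, Y i) ω ≤ -ε'})).toReal := by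
        apply ENNReal.toReal_mono (by finiteness)
        exact le_trans (measure_mono hsub) (measure_union_le _ _)
    _ = (ℙ {ω | ε' ≤ (∑ i ∈ s, Y i) ω}).toReal + (ℙ {ω | (∑ i ∈ s, Y i) ω ≤ -ε'}).toReal :=
        ENNReal.toReal_add hfin1 hfin2
    _ ≤ 2 * (Real.exp (4*t^2*M*(∑ i ∈ s, c i)) * Real.exp (-(t*ε'))) := by
        linarith [hup, hdown]

/-- strong law for weighted centered chi-squared variables:
with bounded nonnegative weights whose row sums grow at least polynomially,
`(∑ bₙᵢ (Wᵢ² - 1)) / (∑ bₙᵢ) → 0` almost surely. -/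
theorem stmt15
    {Ω : Type*} [MeasureSpace Ω] [IsProbabilityMeasure (ℙ : Measure Ω)]
    (W : ℕ → Ω → ℝ)
    (hWmeas : ∀ i, Measurable (W i))
    (hWindep : iIndepFun W ℙ)
    (hWgauss : ∀ i, Measure.map (W i) ℙ = gaussianReal 0 1)
    (b : ℕ → ℕ → ℝ) (hb : ∀ (n i : ℕ), 0 ≤ b n i)
    (M : ℝ) (hM : ∀ (n i : ℕ), b n i ≤ M)
    (δ γ : ℝ) (hδ : 0 < δ) (hγ : 0 < γ)
    (hlb : ∀ᶠ n : ℕ in atTop, δ * (n : ℝ) ^ γ ≤ ∑ i ∈ Finset.Icc 1 n, b n i) :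
    ∀ᵐ ω ∂(ℙ : Measure Ω),
      Tendsto (fun n =>
          (∑ i ∈ Finset.Icc 1 n, b n i * ((W i ω) ^ 2 - 1)) /
            (∑ i ∈ Finset.Icc 1 n, b n i))
        atTop (nhds 0) := by
  classical
  set B : ℕ → ℝ := fun n => ∑ i ∈ Finset.Icc 1 n, b n i with hB
  set S : ℕ → Ω → ℝ := fun n ω => ∑ i ∈ Finset.Icc 1 n, b n i * ((W i ω)^2 - 1) with hS
  have hBnonneg : ∀ n, 0 ≤ B n := fun n => Finset.sum_nonneg fun i _ => hb n i
  have hM0 : 0 < M := by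
    obtain ⟨n₀, hn₀⟩ := eventually_atTop.mp hlb
    set n := max n₀ 1 with hn
    have h1 : δ * (n:ℝ)^γ ≤ B n := hn₀ n (le_max_left _ _)
    have h2 : B n ≤ (n:ℝ) * M := by
      calc B n ≤ ∑ _i ∈ Finset.Icc 1 n, M := Finset.sum_le_sum (fun i _ => hM n i)
        _ = ((Finset.Icc 1 n).card : ℝ) * M := by rw [Finset.sum_const, nsmul_eq_mul]
        _ = (n:ℝ) * M := by rw [Nat.card_Icc]; norm_num
    have hn1 : 1 ≤ n := le_max_right n₀ 1
    have hn1' : (1:ℝ) ≤ (n:ℝ) := by exact_mod_cast hn1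
    have hpow : (0:ℝ) < (n:ℝ)^γ := Real.rpow_pos_of_pos (by linarith) γ
    nlinarith [mul_pos hδ hpow]
  -- main per-k statement
  have main : ∀ k : ℕ, ∀ᵐ ω ∂(ℙ : Measure Ω),
      ∀ᶠ n in atTop, |S n ω| < (1/((k:ℝ)+1)) * B n := by
    intro k
    set ε : ℝ := 1/((k:ℝ)+1) with hε
    have hε0 : 0 < ε := by positivity
    set t : ℝ := min (ε/(8*M)) (1/(4*M)) with htdef
    have ht : 0 < t := lt_min (by positivity) (by positivity)
    have htM : t * M ≤ 1/4 := by
      have h := min_le_right (ε/(8*M)) (1/(4*M))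
      calc t * M ≤ (1/(4*M)) * M := mul_le_mul_of_nonneg_right h hM0.le
        _ = 1/4 := by field_simp
    have htε : 4 * t * M ≤ ε / 2 := by
      have h := min_le_left (ε/(8*M)) (1/(4*M))
      calc 4 * t * M ≤ 4 * (ε/(8*M)) * M := by nlinarith
        _ = ε/2 := by field_simp; ring
    set c0 : ℝ := t * ε / 2 with hc0
    have hc00 : 0 < c0 := by positivity
    set A : ℕ → Set Ω := fun n => {ω | ε * B n ≤ |S n ω|} with hA
    have hbound : ∀ n, (ℙ (A n)).toReal ≤ 2 * Real.exp (-(c0 * B n)) := by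
      intro n
      have h := tail_bound' W hWmeas hWindep hWgauss (b n) (hb n) M (hM n) t ht htM
        (Finset.Icc 1 n) (ε * B n)
      refine h.trans ?_
      rw [← Real.exp_add]
      have harg : 4*t^2*M*(B n) + -(t*(ε * B n)) ≤ -(c0 * B n) := by
        have h1 : 4*t^2*M ≤ t*ε/2 := by nlinarith
        nlinarith [hBnonneg n]
      have := Real.exp_le_exp.mpr harg
      linarith
    obtain ⟨N, hN⟩ := eventually_atTop.mp hlb
    have hofreal : ∀ n, N ≤ n →
        ℙ (A n) ≤ ENNReal.ofReal (2 * Real.exp (-((c0*δ) * (n:ℝ)^γ))) := by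
      intro n hn
      rw [ENNReal.le_ofReal_iff_toReal_le (measure_ne_top _ _) (by positivity)]
      refine (hbound n).trans ?_
      have h1 : δ * (n:ℝ)^γ ≤ B n := hN n hn
      have harg : -(c0 * B n) ≤ -((c0*δ) * (n:ℝ)^γ) := by nlinarith
      have := Real.exp_le_exp.mpr harg
      linarith
    have hsummable : Summable (fun n : ℕ => 2 * Real.exp (-((c0*δ) * (n:ℝ)^γ))) :=
      (summable_exp_neg_rpow' (mul_pos hc00 hδ) hγ).mul_left 2
    have htsum : (∑' n, ℙ (A n)) ≠ ⊤ := by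
      rw [← Summable.sum_add_tsum_nat_add' (k := N) (ENNReal.summable)]
      refine ENNReal.add_ne_top.mpr ⟨?_, ?_⟩
      · exact (ENNReal.sum_lt_top.mpr fun i _ => measure_lt_top _ _).ne
      · have hle : (∑' n : ℕ, ℙ (A (n + N)))
            ≤ ∑' n : ℕ, ENNReal.ofReal (2 * Real.exp (-((c0*δ) * ((n + N : ℕ):ℝ)^γ))) :=
          ENNReal.tsum_le_tsum fun n => hofreal (n + N) (Nat.le_add_left N n)
        refine ne_top_of_le_ne_top ?_ hle
        rw [← ENNReal.ofReal_tsum_of_nonneg (fun n => by positivity)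
          ((summable_nat_add_iff N).mpr hsummable)]
        exact ENNReal.ofReal_ne_top
    have hae := ae_eventually_notMem htsum
    filter_upwards [hae] with ω hω
    filter_upwards [hω] with n hn
    have : ¬ (ε * B n ≤ |S n ω|) := hn
    push_neg at this
    rw [hε] at this ⊢
    exact this
  have hall := ae_all_iff.mpr main
  filter_upwards [hall] with ω hω
  rw [NormedAddCommGroup.tendsto_nhds_zero]
  intro ε hε
  obtain ⟨k, hk⟩ := exists_nat_one_div_lt hε
  filter_upwards [hω k, hlb, eventually_ge_atTop 1] with n h1 h2 h3
  have hn1 : (1:ℝ) ≤ (n:ℝ) := by exact_mod_cast h3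
  have hBpos : 0 < B n := by
    have hpow : (0:ℝ) < (n:ℝ)^γ := Real.rpow_pos_of_pos (by linarith) γ
    exact lt_of_lt_of_le (mul_pos hδ hpow) h2
  have hgoal : |S n ω / B n| < ε := by
    rw [abs_div, abs_of_pos hBpos, div_lt_iff₀ hBpos]
    calc |S n ω| < (1/((k:ℝ)+1)) * B n := h1
      _ ≤ ε * B n := mul_le_mul_of_nonneg_right hk.le hBpos.le
  rw [Real.norm_eq_abs]
  exact hgoal
end
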